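/- arXiv:2105.13863 — 5 statements merged into one kernel-verified Lean document; each statement's English description precedes it below -/
import Mathlib

section
/- Let n and k be integers with 4 ≤ k ≤ n−1, and let X ⊂ ℝ² be an n-independent node set with #X = d(n,k−3)+3 such that dim P_{k,X} ≥ 7. Then dim P_{k−1,X} ≥ 3, i.e., there are three linearly independent curves of degree ≤ k−1 passing through all the nodes of X. -/
open MvPolynomial

noncomputable section

/-- A node (point) in the plane. -/
abbrev Pt : Type := Fin 2 → ℝ

/-- `p` is an `n`-fundamental polynomial of the node `A` with respect to the node set `X`. -/
def IsFund (n : ℕ) (X : Finset Pt) (A : Pt) (p : MvPolynomial (Fin 2) ℝ) : Prop :=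
  p.totalDegree ≤ n ∧ eval A p = 1 ∧ ∀ B ∈ X, B ≠ A → eval B p = 0

/-- The node set `X` is `n`-independent. -/
def NIndep (n : ℕ) (X : Finset Pt) : Prop := ∀ A ∈ X, ∃ p, IsFund n X A p

/-- `N_m = dim Π_m = (m+1)(m+2)/2`. -/
def Nn (m : ℕ) : ℕ := (m + 1) * (m + 2) / 2

/-- `d(n,k) = N_n - N_{n-k}`. -/
def dnk (n k : ℕ) : ℕ := Nn n - Nn (n - k)

/-- The space `P_{k,X}` of polynomials of total degree at most `k` vanishing on `X`. -/
def PkX (k : ℕ) (X : Finset Pt) : Submodule ℝ (MvPolynomial (Fin 2) ℝ) :=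
  restrictTotalDegree (Fin 2) ℝ k ⊓
    ⨅ A ∈ X, LinearMap.ker (aeval (R := ℝ) (S₁ := ℝ) (A : Fin 2 → ℝ)).toLinearMap

set_option synthInstance.maxHeartbeats 1000000
set_option maxHeartbeats 1000000

/-! ### Auxiliary lemmas -/

lemma aeval_eq_eval' (A : Pt) (p : MvPolynomial (Fin 2) ℝ) :
    aeval (R := ℝ) (S₁ := ℝ) (A : Fin 2 → ℝ) p = eval (A : Fin 2 → ℝ) p := by
  rw [aeval_def, Algebra.algebraMap_self]; rfl

lemma mem_PkX {k : ℕ} {X : Finset Pt} {p : MvPolynomial (Fin 2) ℝ} :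
    p ∈ PkX k X ↔ p.totalDegree ≤ k ∧ ∀ A ∈ X, eval (A : Fin 2 → ℝ) p = 0 := by
  constructor
  · rintro ⟨h1, h2⟩
    refine ⟨(mem_restrictTotalDegree _ _ _ ).mp h1, fun A hA => ?_⟩
    have := (Submodule.mem_iInf _).mp h2 A
    have := (Submodule.mem_iInf _).mp this hA
    simpa [aeval_eq_eval'] using this
  · rintro ⟨h1, h2⟩
    refine ⟨(mem_restrictTotalDegree _ _ _ ).mpr h1, ?_⟩
    refine (Submodule.mem_iInf _).mpr fun A => (Submodule.mem_iInf _).mpr fun hA => ?_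
    simpa [aeval_eq_eval'] using h2 A hA

instance PkX_fd (j : ℕ) (X : Finset Pt) : FiniteDimensional ℝ (PkX j X) :=
  Submodule.finiteDimensional_of_le inf_le_left

lemma PkX_mono {j j' : ℕ} (h : j ≤ j') (X : Finset Pt) : PkX j X ≤ PkX j' X := by
  intro p hp
  rw [mem_PkX] at hp ⊢
  exact ⟨hp.1.trans h, hp.2⟩

lemma mul_X_mem {j : ℕ} {X : Finset Pt} {p : MvPolynomial (Fin 2) ℝ}
    (hp : p ∈ PkX j X) (i : Fin 2) : p * MvPolynomial.X i ∈ PkX (j+1) X := by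
  rw [mem_PkX] at hp ⊢
  constructor
  · refine (totalDegree_mul _ _).trans ?_
    have : (MvPolynomial.X i : MvPolynomial (Fin 2) ℝ).totalDegree = 1 := totalDegree_X i
    omega
  · intro A hA
    simp [hp.2 A hA]

lemma deg_add (a b : Fin 2 →₀ ℕ) : (a + b).degree = a.degree + b.degree := by
  simp [Finsupp.degree_eq_weight_one, map_add]

lemma deg_single (i : Fin 2) : (Finsupp.single i 1).degree = 1 := by
  simp [Finsupp.degree_apply, Finsupp.support_single_ne_zero i one_ne_zero]

lemma hc_mul_X (j : ℕ) (p : MvPolynomial (Fin 2) ℝ) (i : Fin 2) :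
    homogeneousComponent (j+1) (p * MvPolynomial.X i)
      = homogeneousComponent j p * MvPolynomial.X i := by
  classical
  ext m
  rw [coeff_homogeneousComponent, coeff_mul_X', coeff_mul_X']
  by_cases h : i ∈ m.support
  · rw [if_pos h, if_pos h, coeff_homogeneousComponent]
    have hm : (m - Finsupp.single i 1) + Finsupp.single i 1 = m := by
      ext a
      by_cases ha : a = i
      · subst ha
        have : 1 ≤ m a := by
          have := Finsupp.mem_support_iff.mp h
          omega
        simp [Finsupp.single_apply, this]
      · simp [Finsupp.single_apply, Ne.symm ha, ha]
    have hdeg : (m - Finsupp.single i 1).degree + 1 = m.degree := by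
      conv_rhs => rw [← hm]
      rw [deg_add, deg_single]
    by_cases hd : m.degree = j + 1
    · rw [if_pos hd, if_pos (by omega)]
    · rw [if_neg hd, if_neg (by omega)]
  · rw [if_neg h, if_neg h, ite_self]

/-- The space of `j`-th homogeneous parts of elements of `P_{j,X}`. -/
def Wsub (j : ℕ) (X : Finset Pt) : Submodule ℝ (MvPolynomial (Fin 2) ℝ) :=
  (PkX j X).map (homogeneousComponent j)

lemma Wsub_eq_range (j : ℕ) (X : Finset Pt) :
    Wsub j X = LinearMap.range
      ((homogeneousComponent (R := ℝ) (σ := Fin 2) j).comp (PkX j X).subtype) := by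
  rw [LinearMap.range_comp, Submodule.range_subtype]; rfl

instance Wsub_fd (j : ℕ) (X : Finset Pt) : FiniteDimensional ℝ (Wsub j X) := by
  rw [Wsub_eq_range]; infer_instance

lemma td_le_of_hc {p : MvPolynomial (Fin 2) ℝ} {j : ℕ} (h1 : p.totalDegree ≤ j + 1)
    (h2 : homogeneousComponent (j+1) p = 0) : p.totalDegree ≤ j := by
  by_contra hcon
  have he : p.totalDegree = j + 1 := by omega
  have hp : p ≠ 0 := by
    intro h; rw [h] at he; simp [totalDegree_zero] at he
  obtain ⟨m, hm, hs⟩ := Finset.exists_mem_eq_sup p.support (support_nonempty.mpr hp)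
    (fun m : Fin 2 →₀ ℕ => m.sum fun _ e => e)
  have hdm : m.degree = j + 1 := by
    have : m.degree = m.sum fun _ e => e := by simp [Finsupp.degree_apply, Finsupp.sum]
    rw [this, ← hs, ← totalDegree, he]
  have : coeff m (homogeneousComponent (j+1) p) = coeff m p := by
    rw [coeff_homogeneousComponent, if_pos hdm]
  rw [h2] at this
  exact (mem_support_iff.mp hm) (by simpa using this.symm)

/-- Rank–nullity relation between consecutive `P_{j,X}`. -/
lemma finrank_PkX_succ (j : ℕ) (X : Finset Pt) :
    Module.finrank ℝ (PkX (j+1) X)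
      = Module.finrank ℝ (PkX j X) + Module.finrank ℝ (Wsub (j+1) X) := by
  classical
  set f := (homogeneousComponent (R := ℝ) (σ := Fin 2) (j+1)).comp (PkX (j+1) X).subtype with hf
  have hr : LinearMap.range f = Wsub (j+1) X := (Wsub_eq_range (j+1) X).symm
  have hkermap : (LinearMap.ker f).map (PkX (j+1) X).subtype = PkX j X := by
    ext p
    simp only [Submodule.mem_map, LinearMap.mem_ker]
    constructor
    · rintro ⟨⟨q, hq⟩, hker, rfl⟩
      have h2 : homogeneousComponent (j+1) q = 0 := by
        simpa [hf] using hker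
      rw [mem_PkX] at hq ⊢
      exact ⟨td_le_of_hc hq.1 h2, hq.2⟩
    · intro hp
      refine ⟨⟨p, PkX_mono (by omega) X hp⟩, ?_, rfl⟩
      have : p.totalDegree < j + 1 := by
        have := (mem_PkX.mp hp).1; omega
      simp only [hf, LinearMap.coe_comp, Function.comp_apply, Submodule.coe_subtype]
      exact homogeneousComponent_eq_zero _ _ this
  have hker : Module.finrank ℝ (LinearMap.ker f) = Module.finrank ℝ (PkX j X) := by
    rw [← hkermap]
    exact (Submodule.equivMapOfInjective _ (PkX (j+1) X).injective_subtype
      (LinearMap.ker f)).finrank_eq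
  have := LinearMap.finrank_range_add_finrank_ker f
  rw [hr, hker] at this
  omega

/-- Multiplication of `Wsub j X` by a variable lands in `Wsub (j+1) X`. -/
lemma Wsub_mul_X {j : ℕ} {X : Finset Pt} {w : MvPolynomial (Fin 2) ℝ}
    (hw : w ∈ Wsub j X) (i : Fin 2) : w * MvPolynomial.X i ∈ Wsub (j+1) X := by
  obtain ⟨p, hp, rfl⟩ := hw
  exact ⟨p * MvPolynomial.X i, mul_X_mem hp i, hc_mul_X j p i⟩

/-- Growth lemma: the space of top-degree forms grows by at least 1 in each degree. -/
lemma Wsub_growth {j : ℕ} {X : Finset Pt} (h : Wsub j X ≠ ⊥) :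
    Module.finrank ℝ (Wsub j X) + 1 ≤ Module.finrank ℝ (Wsub (j+1) X) := by
  classical
  have hex : ∃ d : ℕ, ∃ w ∈ Wsub j X, w ≠ 0 ∧ degreeOf 0 w = d := by
    obtain ⟨w, hw, hw0⟩ := Submodule.exists_mem_ne_zero_of_ne_bot h
    exact ⟨degreeOf 0 w, w, hw, hw0, rfl⟩
  set d0 := Nat.find hex with hd0
  obtain ⟨w1, hw1, hw10, hw1d⟩ := Nat.find_spec hex
  set μ := LinearMap.mulRight ℝ (MvPolynomial.X 0 : MvPolynomial (Fin 2) ℝ) with hμ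
  have hinj : Function.Injective μ := by
    intro a b hab
    simp only [hμ, LinearMap.mulRight_apply] at hab
    exact mul_left_injective₀ (X_ne_zero 0) hab
  set M := (Wsub j X).map μ with hM
  have hMrank : Module.finrank ℝ M = Module.finrank ℝ (Wsub j X) :=
    ((Submodule.equivMapOfInjective μ hinj (Wsub j X)).finrank_eq).symm
  have hMle : M ≤ Wsub (j+1) X := by
    rintro _ ⟨w, hw, rfl⟩
    exact Wsub_mul_X hw 0
  set v := w1 * MvPolynomial.X 1 with hv
  have hvmem : v ∈ Wsub (j+1) X := Wsub_mul_X hw1 1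
  have hvnot : v ∉ M := by
    rintro ⟨w, hw, hwv⟩
    simp only [hμ, LinearMap.mulRight_apply] at hwv
    have hwne : w ≠ 0 := by
      rintro rfl
      rw [zero_mul] at hwv
      exact hw10 (by
        have := hwv.symm
        rw [hv] at this
        exact (mul_eq_zero.mp this).resolve_right (X_ne_zero 1))
    have h1 : degreeOf 0 v = d0 := by
      rw [hv, degreeOf_mul_X_of_ne w1 (by decide : (0 : Fin 2) ≠ 1), hw1d]
    have h2 : degreeOf 0 (w * MvPolynomial.X 0) = degreeOf 0 w + 1 :=
      (degreeOf_mul_X_eq_degreeOf_add_one_iff 0 w).mpr hwne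
    have h3 : d0 ≤ degreeOf 0 w := Nat.find_min' hex ⟨w, hw, hwne, rfl⟩
    rw [hwv] at h2
    omega
  have hlt : M < Wsub (j+1) X := lt_of_le_of_ne hMle (fun h => hvnot (h ▸ hvmem))
  have := Submodule.finrank_lt_finrank_of_lt hlt
  omega

/-! ### Dimension count for the full polynomial space -/

def Tset (m : ℕ) : Finset (ℕ × ℕ) :=
  (Finset.range (m+1)).biUnion (fun j => Finset.HasAntidiagonal.antidiagonal j)

lemma mem_Tset {m : ℕ} (q : ℕ × ℕ) : q ∈ Tset m ↔ q.1 + q.2 ≤ m := by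
  simp only [Tset, Finset.mem_biUnion, Finset.mem_range, Finset.HasAntidiagonal.mem_antidiagonal]
  constructor
  · rintro ⟨j, hj, rfl⟩; omega
  · intro h; exact ⟨q.1 + q.2, by omega, rfl⟩

lemma Tset_card (m : ℕ) : (Tset m).card = Nn m := by
  rw [Tset, Finset.card_biUnion]
  · have : ∀ j ∈ Finset.range (m+1), (Finset.HasAntidiagonal.antidiagonal j).card = j + 1 := by
      intro j _; exact Finset.Nat.card_antidiagonal j
    rw [Finset.sum_congr rfl this]
    have h1 : ∑ j ∈ Finset.range (m+1), (j+1) = ∑ j ∈ Finset.range (m+2), j := by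
      rw [Finset.sum_range_succ' (fun i => i) (m+1)]
      simp
    rw [h1, Finset.sum_range_id]
    simp [Nn, Nat.mul_comm]
  · intro a _ b _ hab
    simp only [Finset.disjoint_left, Finset.HasAntidiagonal.mem_antidiagonal]
    intro x h1 h2; omega

lemma card_sumle (m : ℕ) :
    ∀ (_ : Fintype {q : ℕ × ℕ // q.1 + q.2 ≤ m}),
      Fintype.card {q : ℕ × ℕ // q.1 + q.2 ≤ m} = Nn m := by
  intro _
  rw [← Tset_card m]
  exact Fintype.card_of_subtype (Tset m) mem_Tset

lemma finrank_restrict (m : ℕ) :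
    Module.finrank ℝ (restrictTotalDegree (Fin 2) ℝ m) = Nn m := by
  classical
  set S : Set (Fin 2 →₀ ℕ) := { d | (d.sum fun _ e => e) ≤ m } with hS
  have hsum : ∀ d : Fin 2 →₀ ℕ, (d.sum fun _ e => e) = d 0 + d 1 := by
    intro d
    rw [Finsupp.sum_fintype _ _ (fun _ => rfl), Fin.sum_univ_two]
  let e0 : (Fin 2 →₀ ℕ) ≃ (ℕ × ℕ) :=
    Finsupp.equivFunOnFinite.trans (piFinTwoEquiv (fun _ => ℕ))
  have he0 : ∀ d : Fin 2 →₀ ℕ, (e0 d).1 + (e0 d).2 = d 0 + d 1 := fun d => rfl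
  let E : ↥S ≃ {q : ℕ × ℕ // q.1 + q.2 ≤ m} :=
    e0.subtypeEquiv (by
      intro d
      simp only [hS, Set.mem_setOf_eq, hsum d, he0 d])
  haveI : Fintype {q : ℕ × ℕ // q.1 + q.2 ≤ m} := Fintype.subtype (Tset m) mem_Tset
  haveI : Fintype ↥S := Fintype.ofEquiv _ E.symm
  have hbasis := Module.finrank_eq_card_basis (basisRestrictSupport ℝ S)
  show Module.finrank ℝ (restrictSupport ℝ S) = Nn m
  rw [hbasis, Fintype.card_congr E, card_sumle m _]

/-! ### The evaluation map and `n`-independence -/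

/-- Evaluation map on polynomials of degree at most `n`. -/
def evalMap (n : ℕ) (X : Finset Pt) : restrictTotalDegree (Fin 2) ℝ n →ₗ[ℝ] (↥X → ℝ) :=
  LinearMap.pi (fun A =>
    ((aeval (R := ℝ) (S₁ := ℝ) ((A : Pt) : Fin 2 → ℝ)).toLinearMap).comp
      (Submodule.subtype _))

lemma evalMap_surj {n : ℕ} {X : Finset Pt} (hind : NIndep n X) :
    Function.Surjective (evalMap n X) := by
  rw [← LinearMap.range_eq_top]
  have hsingle : ∀ A : ↥X, Pi.single A (1:ℝ) ∈ LinearMap.range (evalMap n X) := by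
    intro A
    obtain ⟨p, hdeg, hone, hzero⟩ := hind A.1 A.2
    refine ⟨⟨p, (mem_restrictTotalDegree _ _ _).mpr hdeg⟩, ?_⟩
    funext B
    by_cases hB : B = A
    · subst hB
      simp [evalMap, aeval_eq_eval', hone, Pi.single_apply]
    · have hBA : (B : Pt) ≠ (A : Pt) := fun h => hB (Subtype.ext h)
      simp [evalMap, aeval_eq_eval', hzero B.1 B.2 hBA, Pi.single_apply, hB]
  rw [eq_top_iff, ← (Pi.basisFun ℝ ↥X).span_eq, Submodule.span_le]
  rintro _ ⟨A, rfl⟩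
  simpa [Pi.basisFun_apply] using hsingle A

lemma Nn_eq_finrank_add_card {n : ℕ} {X : Finset Pt} (hind : NIndep n X) :
    Nn n = Module.finrank ℝ (PkX n X) + X.card := by
  classical
  have h1 := LinearMap.finrank_range_add_finrank_ker (evalMap n X)
  have h2 : LinearMap.range (evalMap n X) = ⊤ := LinearMap.range_eq_top.mpr (evalMap_surj hind)
  have h3 : Module.finrank ℝ (LinearMap.range (evalMap n X)) = X.card := by
    rw [h2, finrank_top, Module.finrank_pi, Fintype.card_coe]
  have h4 : (LinearMap.ker (evalMap n X)).map (restrictTotalDegree (Fin 2) ℝ n).subtype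
      = PkX n X := by
    ext p
    simp only [Submodule.mem_map, LinearMap.mem_ker]
    constructor
    · rintro ⟨⟨q, hq⟩, hker, rfl⟩
      rw [mem_PkX]
      refine ⟨(mem_restrictTotalDegree _ _ _).mp hq, fun A hA => ?_⟩
      have := congrFun hker ⟨A, hA⟩
      simpa [evalMap, aeval_eq_eval'] using this
    · intro hp
      rw [mem_PkX] at hp
      refine ⟨⟨p, (mem_restrictTotalDegree _ _ _).mpr hp.1⟩, ?_, rfl⟩
      funext A
      simpa [evalMap, aeval_eq_eval'] using hp.2 A.1 A.2
  have h5 : Module.finrank ℝ (LinearMap.ker (evalMap n X)) = Module.finrank ℝ (PkX n X) := by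
    rw [← h4]
    exact (Submodule.equivMapOfInjective _ (restrictTotalDegree (Fin 2) ℝ n).injective_subtype
      (LinearMap.ker (evalMap n X))).finrank_eq
  rw [h3, h5, finrank_restrict n] at h1
  omega

/-! ### Arithmetic about `Nn` -/

lemma two_Nn (m : ℕ) : 2 * Nn m = (m+1) * (m+2) :=
  Nat.mul_div_cancel' (Nat.even_mul_succ_self (m+1)).two_dvd

lemma Nn_mono {a b : ℕ} (h : a ≤ b) : Nn a ≤ Nn b := by
  apply Nat.div_le_div_right
  apply Nat.mul_le_mul <;> omega

/-- **Proposition 5 (existence of three curves of degree `k-1`).** -/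
theorem stmt2 (n k : ℕ) (hk4 : 4 ≤ k) (hkn : k + 1 ≤ n) (X : Finset Pt)
    (hind : NIndep n X) (hcard : X.card = dnk n (k - 3) + 3)
    (hdim : 7 ≤ Module.finrank ℝ (PkX k X)) :
    3 ≤ Module.finrank ℝ (PkX (k - 1) X) := by
  by_contra hcon
  push_neg at hcon
  obtain ⟨k', rfl⟩ : ∃ k', k = k' + 1 := ⟨k - 1, by omega⟩
  have hD2 : Module.finrank ℝ (PkX k' X) ≤ 2 := by
    have : k' + 1 - 1 = k' := by omega
    rw [this] at hcon
    omega
  have hbase := finrank_PkX_succ k' X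
  have hW0 : 5 ≤ Module.finrank ℝ (Wsub (k'+1) X) := by omega
  -- the chain of growing top-degree parts
  have chain : ∀ i, k' + 1 + i ≤ n →
      5 + i ≤ Module.finrank ℝ (Wsub (k'+1+i) X) ∧
      14 + 10*i + i*(i+1) ≤ 2 * Module.finrank ℝ (PkX (k'+1+i) X) := by
    intro i
    induction i with
    | zero =>
      intro _
      constructor
      · simpa using hW0
      · simpa using (by omega : 14 ≤ 2 * Module.finrank ℝ (PkX (k'+1) X))
    | succ i ih =>
      intro hle
      have h1 := ih (by omega)
      have hne : Wsub (k'+1+i) X ≠ ⊥ := by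
        intro hbot
        have h0 : Module.finrank ℝ (Wsub (k'+1+i) X) = 0 := by
          rw [hbot]; exact finrank_bot ℝ _
        omega
      have hg := Wsub_growth hne
      have hs := finrank_PkX_succ (k'+1+i) X
      have hidx : k' + 1 + (i+1) = (k' + 1 + i) + 1 := by omega
      rw [hidx]
      constructor
      · omega
      · have key : 14 + 10*(i+1) + (i+1)*(i+1+1)
            = (14 + 10*i + i*(i+1)) + (12 + 2*i) := by ring
        rw [key]
        linarith [h1.2, hg, hs]
  set e := n - (k'+1) with he
  have he1 : 1 ≤ e := by omega
  have hen : k' + 1 + e = n := by omega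
  have hchain := (chain e (by omega)).2
  rw [hen] at hchain
  have hNn := Nn_eq_finrank_add_card hind
  have hmono : Nn (e+3) ≤ Nn n := Nn_mono (by omega)
  have h10 : 10 ≤ Nn (e+3) := by
    have : Nn 3 ≤ Nn (e+3) := Nn_mono (by omega)
    have h3 : Nn 3 = 10 := by norm_num [Nn]
    omega
  have hidx3 : n - (k' + 1 - 3) = e + 3 := by omega
  have hcard' : X.card = (Nn n - Nn (e+3)) + 3 := by
    rw [hcard, dnk, hidx3]
  have hDn : 2 * Module.finrank ℝ (PkX n X) + 6 = 2 * Nn (e+3) := by omega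
  have h2B : 2 * Nn (e+3) = (e+4)*(e+5) := by
    have := two_Nn (e+3)
    have harr : e + 3 + 1 = e + 4 := by omega
    have harr2 : e + 3 + 2 = e + 5 := by omega
    rw [harr, harr2] at this
    exact this
  have hprod : (e+4)*(e+5) = e*(e+1) + 8*e + 20 := by ring
  linarith [hchain, hDn, h2B, hprod, he1]
end
end

section
/- Let n and k be integers with 4 ≤ k ≤ n−1, and let X ⊂ ℝ² be an n-independent node set with #X = d(n,k−3)+3 such that dim P_{k,X} ≥ 7. Assume additionally that there is a nonzero polynomial σ₀ of total degree ≤ k−2 vanishing at all the nodes of X. Then there exists a polynomial μ of exact total degree k−3 vanishing at exactly d(n,k−3) nodes of X (a maximal curve of degree k−3 for X), and the remaining three nodes of X are collinear. -/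
open MvPolynomial

noncomputable section

abbrev MP := MvPolynomial (Fin 2) ℝ

lemma Nn_succ (m : ℕ) : Nn (m + 1) = Nn m + (m + 2) := by
  obtain ⟨t, ht⟩ := Nat.even_mul_succ_self (m + 1)
  have ht' : (m + 1) * (m + 2) = t + t := by
    have : (m + 1) * (m + 1 + 1) = (m + 1) * (m + 2) := by ring
    omega
  have h2 : (m + 1 + 1) * (m + 1 + 2) = (m + 1) * (m + 2) + 2 * (m + 2) := by ring
  show (m + 1 + 1) * (m + 1 + 2) / 2 = (m + 1) * (m + 2) / 2 + (m + 2)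
  omega

lemma Nn_mono_s3 : Monotone Nn :=
  monotone_nat_of_le_succ fun m => by rw [Nn_succ]; omega

lemma Nn_ge (m : ℕ) : m + 1 ≤ Nn m := by
  induction m with
  | zero => decide
  | succ m ih => rw [Nn_succ]; omega

def Fm (m : ℕ) : Finset (ℕ × ℕ) :=
  (Finset.range (m + 1) ×ˢ Finset.range (m + 1)).filter fun q => q.1 + q.2 ≤ m

lemma mem_Fm {m : ℕ} {q : ℕ × ℕ} : q ∈ Fm m ↔ q.1 + q.2 ≤ m := by
  simp only [Fm, Finset.mem_filter, Finset.mem_product, Finset.mem_range]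
  omega

lemma Fm_card (m : ℕ) : (Fm m).card = Nn m := by
  induction m with
  | zero => decide
  | succ m ih =>
    have hdecomp : Fm (m + 1) = Fm m ∪ (Finset.range (m + 2)).image (fun a => (a, m + 1 - a)) := by
      ext q
      obtain ⟨x, y⟩ := q
      simp only [mem_Fm, Finset.mem_union, Finset.mem_image, Finset.mem_range, Prod.mk.injEq]
      constructor
      · intro h
        rcases Nat.lt_or_ge (x + y) (m + 1) with h' | h'
        · left; omega
        · right; exact ⟨x, by omega, rfl, by omega⟩
      · rintro (h | ⟨a, ha, rfl, rfl⟩) <;> omega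
    have hdisj : Disjoint (Fm m) ((Finset.range (m + 2)).image (fun a => (a, m + 1 - a))) := by
      rw [Finset.disjoint_left]
      intro q hq hq'
      rw [mem_Fm] at hq
      simp only [Finset.mem_image, Finset.mem_range] at hq'
      obtain ⟨a, ha, rfl⟩ := hq'
      simp only at hq
      omega
    have hinj : Function.Injective (fun a : ℕ => (a, m + 1 - a)) := by
      intro a b hab
      exact (Prod.mk.injEq _ _ _ _).mp hab |>.1
    rw [hdecomp, Finset.card_union_of_disjoint hdisj, ih,
      Finset.card_image_of_injective _ hinj, Finset.card_range, Nn_succ]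

lemma sumFin2 (d : Fin 2 →₀ ℕ) : (d.sum fun _ e => e) = d 0 + d 1 := by
  rw [Finsupp.sum_fintype _ _ (fun _ => rfl), Fin.sum_univ_two]

def SdI (m : ℕ) : Set (Fin 2 →₀ ℕ) := {d | (d.sum fun _ e => e) ≤ m}

def degEquiv (m : ℕ) : (SdI m) ≃ {q : ℕ × ℕ // q.1 + q.2 ≤ m} where
  toFun d := ⟨(d.1 0, d.1 1), by have := d.2; simpa [SdI, sumFin2] using this⟩
  invFun q := ⟨Finsupp.equivFunOnFinite.symm ![q.1.1, q.1.2], by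
    have : ((Finsupp.equivFunOnFinite.symm ![q.1.1, q.1.2] : Fin 2 →₀ ℕ).sum fun _ e => e)
        = q.1.1 + q.1.2 := by
      rw [sumFin2]
      simp [Finsupp.coe_equivFunOnFinite_symm]
    simpa [SdI, this] using q.2⟩
  left_inv d := by
    apply Subtype.ext
    ext i
    fin_cases i <;> simp [Finsupp.coe_equivFunOnFinite_symm]
  right_inv q := by
    apply Subtype.ext
    apply Prod.ext <;> simp [Finsupp.coe_equivFunOnFinite_symm]

instance fintypeSum (m : ℕ) : Fintype {q : ℕ × ℕ // q.1 + q.2 ≤ m} :=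
  Fintype.subtype (Fm m) fun q => mem_Fm

instance fintypeSdI (m : ℕ) : Fintype (SdI m) := Fintype.ofEquiv _ (degEquiv m).symm

lemma restrictTD_eq (m : ℕ) :
    restrictTotalDegree (Fin 2) ℝ m = restrictSupport ℝ (SdI m) := rfl

instance fdRestrict (m : ℕ) : FiniteDimensional ℝ (restrictTotalDegree (Fin 2) ℝ m) := by
  rw [restrictTD_eq]
  exact Module.Finite.of_basis (basisRestrictSupport ℝ (SdI m))

lemma aeval_eq_eval (x : Pt) (q : MP) : aeval (R := ℝ) (S₁ := ℝ) x q = eval x q := by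
  rw [aeval_def]; rfl

lemma mem_PkX_s3 {N : ℕ} {Y : Finset Pt} {q : MP} :
    q ∈ PkX N Y ↔ q.totalDegree ≤ N ∧ ∀ A ∈ Y, eval A q = 0 := by
  unfold PkX
  rw [Submodule.mem_inf, mem_restrictTotalDegree]
  refine and_congr_right fun _ => ?_
  simp [Submodule.mem_iInf, LinearMap.mem_ker, aeval_eq_eval]

instance fdPkX (N : ℕ) (Y : Finset Pt) : FiniteDimensional ℝ (PkX N Y) :=
  Submodule.finiteDimensional_of_le (S₂ := restrictTotalDegree (Fin 2) ℝ N) inf_le_left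

lemma card_le_and_finrank_PkX {n : ℕ} {X : Finset Pt} (hind : NIndep n X) {Y : Finset Pt}
    (hY : Y ⊆ X) :
    Y.card ≤ Nn n ∧ Module.finrank ℝ (PkX n Y) = Nn n - Y.card := by
  classical
  set W := restrictTotalDegree (Fin 2) ℝ n with hW
  set E : W →ₗ[ℝ] (↥Y → ℝ) :=
    LinearMap.pi (fun A => ((aeval (R := ℝ) (S₁ := ℝ) (A : Pt)).toLinearMap).comp W.subtype)
    with hE
  have hEapp : ∀ (w : W) (A : ↥Y), E w A = eval (A : Pt) (w : MP) := by
    intro w A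
    simp [hE, aeval_eq_eval]
  have hker : Submodule.map W.subtype (LinearMap.ker E) = PkX n Y := by
    ext q
    constructor
    · rintro ⟨⟨q', hq'⟩, hqker, rfl⟩
      rw [mem_PkX_s3]
      refine ⟨(mem_restrictTotalDegree _ _ _).mp hq', fun A hA => ?_⟩
      have hqk : E ⟨q', hq'⟩ = 0 := hqker
      have h2 := congrFun hqk ⟨A, hA⟩
      rw [hEapp] at h2
      simpa using h2
    · intro hq
      rw [mem_PkX_s3] at hq
      refine ⟨⟨q, (mem_restrictTotalDegree _ _ _).mpr hq.1⟩, ?_, rfl⟩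
      simp only [SetLike.mem_coe, LinearMap.mem_ker]
      funext A
      rw [hEapp]
      exact hq.2 A A.2
  have hsurj : LinearMap.range E = ⊤ := by
    rw [eq_top_iff]
    rintro v -
    have hv : v = ∑ A : ↥Y, v A • (Pi.single A 1 : ↥Y → ℝ) := by
      have h1 : ∀ A : ↥Y, v A • (Pi.single A 1 : ↥Y → ℝ) = Pi.single A (v A) := by
        intro A
        rw [← Pi.single_smul, smul_eq_mul, mul_one]
      simp_rw [h1]
      rw [Finset.univ_sum_single]
    rw [hv]
    apply Submodule.sum_mem
    intro A _
    apply Submodule.smul_mem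
    obtain ⟨pA, hdeg, hval, hzero⟩ := hind A (hY A.2)
    refine ⟨⟨pA, (mem_restrictTotalDegree _ _ _).mpr hdeg⟩, ?_⟩
    funext B
    rw [hEapp, Pi.single_apply]
    by_cases hBA : B = A
    · subst hBA; simp [hval]
    · rw [if_neg hBA]
      exact hzero B (hY B.2) fun h => hBA (Subtype.ext h)
  have hrn := LinearMap.finrank_range_add_finrank_ker E
  rw [hsurj, finrank_top] at hrn
  have hfW : Module.finrank ℝ W = Nn n := finrank_restrict n
  have hfY : Module.finrank ℝ (↥Y → ℝ) = Y.card := by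
    rw [Module.finrank_pi, Fintype.card_coe]
  rw [hfY, hfW] at hrn
  have hfr : Module.finrank ℝ (PkX n Y) = Module.finrank ℝ (LinearMap.ker E) := by
    rw [← hker, Submodule.finrank_map_subtype_eq]
  exact ⟨by omega, by omega⟩

def Mf (f : MP) (d : ℕ) : Submodule ℝ MP :=
  (restrictTotalDegree (Fin 2) ℝ d).map (LinearMap.mulLeft ℝ f)

lemma mem_Mf {f : MP} {d : ℕ} {q : MP} :
    q ∈ Mf f d ↔ ∃ y : MP, y.totalDegree ≤ d ∧ f * y = q := by
  constructor
  · rintro ⟨y, hy, rfl⟩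
    exact ⟨y, (mem_restrictTotalDegree _ _ _).mp hy, rfl⟩
  · rintro ⟨y, hy, rfl⟩
    exact ⟨y, (mem_restrictTotalDegree _ _ _).mpr hy, rfl⟩

instance fdMf (f : MP) (d : ℕ) : FiniteDimensional ℝ (Mf f d) :=
  Module.Finite.map _ _

lemma finrank_Mf {f : MP} (hf : f ≠ 0) (d : ℕ) : Module.finrank ℝ (Mf f d) = Nn d := by
  have hinj : Function.Injective (LinearMap.mulLeft ℝ f) := by
    intro a b hab
    simp only [LinearMap.mulLeft_apply] at hab
    exact mul_left_cancel₀ hf hab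
  rw [Mf, ← (Submodule.equivMapOfInjective _ hinj
    (restrictTotalDegree (Fin 2) ℝ d)).finrank_eq]
  exact finrank_restrict d

lemma Mf_le_PkX {f : MP} {d N : ℕ} {Y : Finset Pt} (hdeg : f.totalDegree + d ≤ N)
    (hv : ∀ A ∈ Y, eval A f = 0) : Mf f d ≤ PkX N Y := by
  intro q hq
  obtain ⟨y, hy, rfl⟩ := mem_Mf.mp hq
  rw [mem_PkX_s3]
  constructor
  · calc (f * y).totalDegree ≤ f.totalDegree + y.totalDegree := totalDegree_mul f y
      _ ≤ N := by omega
  · intro A hA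
    rw [map_mul, hv A hA, zero_mul]

lemma count1 {n : ℕ} {X : Finset Pt} (hind : NIndep n X) {Y : Finset Pt} (hY : Y ⊆ X)
    {f : MP} (hf : f ≠ 0) {d : ℕ} (hdeg : f.totalDegree + d ≤ n)
    (hv : ∀ A ∈ Y, eval A f = 0) : Nn d + Y.card ≤ Nn n := by
  obtain ⟨hYle, hfr⟩ := card_le_and_finrank_PkX hind hY
  have h1 : Module.finrank ℝ (Mf f d) ≤ Module.finrank ℝ (PkX n Y) :=
    Submodule.finrank_mono (Mf_le_PkX hdeg hv)
  rw [finrank_Mf hf d, hfr] at h1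
  omega

lemma count2core {n : ℕ} {X : Finset Pt} (hind : NIndep n X) {Y : Finset Pt} (hY : Y ⊆ X)
    {f h : MP} (hf : f ≠ 0) (hh : h ≠ 0) {α β : ℕ}
    (hfd : f.totalDegree + α ≤ n) (hhd : h.totalDegree + β ≤ n)
    (hfv : ∀ A ∈ Y, eval A f = 0) (hhv : ∀ A ∈ Y, eval A h = 0)
    (I : Submodule ℝ MP) [FiniteDimensional ℝ I]
    (hI : Mf f α ⊓ Mf h β ≤ I) :
    Nn α + Nn β + Y.card ≤ Nn n + Module.finrank ℝ I := by
  obtain ⟨hYle, hfr⟩ := card_le_and_finrank_PkX hind hY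
  have hsup : Mf f α ⊔ Mf h β ≤ PkX n Y :=
    sup_le (Mf_le_PkX hfd hfv) (Mf_le_PkX hhd hhv)
  have h1 : Module.finrank ℝ (Mf f α ⊔ Mf h β : Submodule ℝ MP) ≤ Nn n - Y.card := by
    rw [← hfr]; exact Submodule.finrank_mono hsup
  have h2 : Module.finrank ℝ (Mf f α ⊓ Mf h β : Submodule ℝ MP) ≤ Module.finrank ℝ I :=
    Submodule.finrank_mono hI
  have h3 := Submodule.finrank_sup_add_finrank_inf_eq (Mf f α) (Mf h β)
  rw [finrank_Mf hf α, finrank_Mf hh β] at h3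
  omega


def TT : MP →ₐ[ℝ] Polynomial MP :=
  aeval (fun i => Polynomial.C (X i) * Polynomial.X)

lemma TT_monomial (d : Fin 2 →₀ ℕ) (c : ℝ) :
    TT (monomial d c) = Polynomial.C (monomial d c) * Polynomial.X ^ (d.sum fun _ e => e) := by
  rw [TT, aeval_monomial]
  have h1 : (d.prod fun i k => (Polynomial.C (X i : MP) * Polynomial.X) ^ k)
      = Polynomial.C (d.prod fun i k => (X i : MP) ^ k)
        * Polynomial.X ^ (d.sum fun _ e => e) := by
    have e1 : (d.prod fun i k => (Polynomial.C (X i : MP) * Polynomial.X) ^ k)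
        = d.prod fun i k => Polynomial.C ((X i : MP) ^ k) * Polynomial.X ^ k := by
      apply Finsupp.prod_congr
      intro i _
      rw [mul_pow, map_pow]
    rw [e1, Finsupp.prod_mul]
    congr 1
    · rw [Finsupp.prod, Finsupp.prod, map_prod]
    · rw [Finsupp.prod, Finsupp.sum, Finset.prod_pow_eq_pow_sum]
  rw [h1, monomial_eq]
  rw [Polynomial.algebraMap_apply, MvPolynomial.algebraMap_eq, ← mul_assoc, ← map_mul]

lemma TT_coeff (f : MP) (j : ℕ) :
    (TT f).coeff j
      = ∑ d ∈ f.support, if (d.sum fun _ e => e) = j then monomial d (coeff d f) else 0 := by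
  conv_lhs => rw [f.as_sum, map_sum]
  rw [Polynomial.finset_sum_coeff]
  refine Finset.sum_congr rfl fun d _ => ?_
  rw [TT_monomial, Polynomial.coeff_C_mul, Polynomial.coeff_X_pow]
  rcases eq_or_ne (d.sum fun _ e => e) j with h | h
  · simp [h]
  · rw [if_neg (Ne.symm h), if_neg h, mul_zero]

lemma TT_coeff_top {f : MP} (hf : f ≠ 0) : (TT f).coeff f.totalDegree ≠ 0 := by
  have hne : f.support.Nonempty := by
    rw [Finset.nonempty_iff_ne_empty]
    intro h
    exact hf (MvPolynomial.support_eq_empty.mp h)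
  obtain ⟨d₀, hd₀, hsup⟩ := Finset.exists_mem_eq_sup f.support hne (fun d => d.sum fun _ e => e)
  have htd : f.totalDegree = (d₀.sum fun _ e => e) := hsup
  rw [TT_coeff]
  intro hzero
  have hc := congrArg (coeff d₀) hzero
  rw [coeff_sum] at hc
  simp only [apply_ite (coeff d₀), coeff_monomial, coeff_zero] at hc
  rw [Finset.sum_eq_single d₀ (fun d _ hne' => by simp [hne'])
    (fun h => absurd hd₀ h)] at hc
  rw [if_pos htd.symm, if_pos rfl] at hc
  exact (MvPolynomial.mem_support_iff.mp hd₀) hc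

lemma TT_ne_zero {f : MP} (hf : f ≠ 0) : TT f ≠ 0 := by
  intro h
  apply TT_coeff_top hf
  rw [h, Polynomial.coeff_zero]

lemma TT_natDegree {f : MP} (hf : f ≠ 0) : (TT f).natDegree = f.totalDegree := by
  refine le_antisymm ?_ (Polynomial.le_natDegree_of_ne_zero (TT_coeff_top hf))
  rw [Polynomial.natDegree_le_iff_coeff_eq_zero]
  intro N hN
  rw [TT_coeff]
  apply Finset.sum_eq_zero
  intro d hd
  rw [if_neg]
  exact fun hc => absurd hc (Nat.ne_of_lt (lt_of_le_of_lt (le_totalDegree hd) hN))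

lemma totalDegree_mul_eq {f g : MP} (hf : f ≠ 0) (hg : g ≠ 0) :
    (f * g).totalDegree = f.totalDegree + g.totalDegree := by
  have h := TT_natDegree (mul_ne_zero hf hg)
  rw [map_mul, Polynomial.natDegree_mul (TT_ne_zero hf) (TT_ne_zero hg),
    TT_natDegree hf, TT_natDegree hg] at h
  omega

lemma eq_C_of_totalDegree_eq_zero {q : MP} (h : q.totalDegree = 0) :
    q = C (coeff 0 q) := by
  ext m
  rcases eq_or_ne m 0 with rfl | hm
  · simp
  · rw [coeff_C, if_neg (Ne.symm hm)]
    by_contra hc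
    have hmem : m ∈ q.support := MvPolynomial.mem_support_iff.mpr hc
    have := (MvPolynomial.totalDegree_eq_zero_iff _ q).mp h m hmem
    exact hm (Finsupp.ext this)

lemma isUnit_of_deg_zero {q : MP} (hq : q ≠ 0) (h : q.totalDegree = 0) : IsUnit q := by
  rw [eq_C_of_totalDegree_eq_zero h]
  have hc : coeff 0 q ≠ 0 := by
    intro hc
    apply hq
    rw [eq_C_of_totalDegree_eq_zero h, hc, map_zero]
  exact (isUnit_iff_ne_zero.mpr hc).map (C : ℝ →+* MP)

lemma exists_factor : ∀ (N : ℕ) (f h : MP), f.totalDegree ≤ N → f ≠ 0 → h ≠ 0 →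
    ∃ g f₁ h₁ : MP, f = g * f₁ ∧ h = g * h₁ ∧ g ≠ 0 ∧ IsRelPrime f₁ h₁ := by
  intro N
  induction N with
  | zero =>
    intro f h hdeg hf hh
    refine ⟨1, f, h, (one_mul f).symm, (one_mul h).symm, one_ne_zero, fun d hdf _ => ?_⟩
    exact isUnit_of_dvd_unit hdf (isUnit_of_deg_zero hf (Nat.le_zero.mp hdeg))
  | succ N ih =>
    intro f h hdeg hf hh
    by_cases hrp : IsRelPrime f h
    · exact ⟨1, f, h, (one_mul f).symm, (one_mul h).symm, one_ne_zero, hrp⟩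
    · rw [IsRelPrime] at hrp
      push_neg at hrp
      obtain ⟨d, hdf, hdh, hdu⟩ := hrp
      obtain ⟨f', rfl⟩ := hdf
      obtain ⟨h', rfl⟩ := hdh
      have hd0 : d ≠ 0 := left_ne_zero_of_mul hf
      have hf' : f' ≠ 0 := right_ne_zero_of_mul hf
      have hh' : h' ≠ 0 := right_ne_zero_of_mul hh
      have hdd : 1 ≤ d.totalDegree := by
        rcases Nat.eq_zero_or_pos d.totalDegree with hz | hp
        · exact absurd (isUnit_of_deg_zero hd0 hz) hdu
        · exact hp
      have hdeg' : f'.totalDegree ≤ N := by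
        have := totalDegree_mul_eq hd0 hf'
        omega
      obtain ⟨g, f₁, h₁, hfe, hhe, hg0, hrp'⟩ := ih f' h' hdeg' hf' hh'
      exact ⟨d * g, f₁, h₁, by rw [hfe]; ring, by rw [hhe]; ring,
        mul_ne_zero hd0 hg0, hrp'⟩

lemma fin2supp_classify (d : Fin 2 →₀ ℕ) (h : d 0 + d 1 ≤ 1) :
    d = 0 ∨ d = Finsupp.single 0 1 ∨ d = Finsupp.single 1 1 := by
  have hcase : (d 0 = 0 ∧ d 1 = 0) ∨ (d 0 = 1 ∧ d 1 = 0) ∨ (d 0 = 0 ∧ d 1 = 1) := by omega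
  rcases hcase with ⟨h0, h1⟩ | ⟨h0, h1⟩ | ⟨h0, h1⟩
  · left; ext i; fin_cases i <;> simp [h0, h1]
  · right; left; ext i; fin_cases i <;> simp [Finsupp.single_apply, h0, h1]
  · right; right; ext i; fin_cases i <;> simp [Finsupp.single_apply, h0, h1]

lemma single_ne01 : (Finsupp.single 0 1 : Fin 2 →₀ ℕ) ≠ Finsupp.single 1 1 := by
  intro h
  have := DFunLike.congr_fun h 0
  simp [Finsupp.single_apply] at this

lemma single_ne0 (i : Fin 2) : (Finsupp.single i 1 : Fin 2 →₀ ℕ) ≠ 0 := by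
  intro h
  have := DFunLike.congr_fun h i
  simp [Finsupp.single_apply] at this

lemma eval_deg_le_one (q : MP) (hq : q.totalDegree ≤ 1) (x : Pt) :
    eval x q = coeff 0 q + coeff (Finsupp.single 0 1) q * x 0
      + coeff (Finsupp.single 1 1) q * x 1 := by
  classical
  rw [eval_eq']
  have hsub : q.support ⊆ {0, Finsupp.single 0 1, Finsupp.single 1 1} := by
    intro d hd
    have hle : d 0 + d 1 ≤ 1 := by
      have h1 := le_totalDegree hd
      rw [sumFin2] at h1
      omega
    rcases fin2supp_classify d hle with h | h | h <;> simp [h]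
  rw [Finset.sum_subset hsub (fun d _ hd => by
    rw [MvPolynomial.notMem_support_iff.mp hd, zero_mul])]
  rw [Finset.sum_insert (by
      simp only [Finset.mem_insert, Finset.mem_singleton]
      push_neg
      exact ⟨Ne.symm (single_ne0 0), Ne.symm (single_ne0 1)⟩),
    Finset.sum_insert (by simp [single_ne01]), Finset.sum_singleton]
  simp only [Finsupp.coe_zero, Pi.zero_apply, pow_zero, Fin.prod_univ_two,
    Finsupp.single_apply]
  norm_num
  ring

lemma linear_coeff_ne {q : MP} (hdeg : q.totalDegree = 1) :
    coeff (Finsupp.single 0 1) q ≠ 0 ∨ coeff (Finsupp.single 1 1) q ≠ 0 := by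
  by_contra hcon
  push_neg at hcon
  obtain ⟨h0, h1⟩ := hcon
  have : q.totalDegree = 0 := by
    rw [MvPolynomial.totalDegree_eq_zero_iff]
    intro m hm i
    have hle : m 0 + m 1 ≤ 1 := by
      have := le_totalDegree hm
      rw [sumFin2, hdeg] at this
      omega
    rcases fin2supp_classify m hle with h | h | h
    · rw [h]; rfl
    · rw [h] at hm
      exact absurd (MvPolynomial.mem_support_iff.mp hm) (not_not.mpr h0)
    · rw [h] at hm
      exact absurd (MvPolynomial.mem_support_iff.mp hm) (not_not.mpr h1)
  omega

lemma collinear_of_linear (a b c : ℝ) (hab : a ≠ 0 ∨ b ≠ 0) (S : Set Pt)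
    (hS : ∀ x ∈ S, c + a * x 0 + b * x 1 = 0) : Collinear ℝ S := by
  have hsub : S ⊆ {x : Pt | c + a * x 0 + b * x 1 = 0} := hS
  refine Collinear.subset hsub ?_
  rcases hab with ha | hb
  · have hp₀ : (fun i : Fin 2 => if i = 0 then -(c / a) else 0)
        ∈ {x : Pt | c + a * x 0 + b * x 1 = 0} := by
      simp only [Set.mem_setOf_eq, if_pos rfl]
      norm_num
      field_simp
      ring
    rw [collinear_iff_of_mem hp₀]
    refine ⟨fun i : Fin 2 => if i = 0 then -b else a, fun p hp => ⟨p 1 / a, ?_⟩⟩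
    simp only [Set.mem_setOf_eq] at hp
    funext i
    simp only [Pi.vadd_apply, vadd_eq_add, Pi.add_apply, Pi.smul_apply, smul_eq_mul]
    fin_cases i
    · simp only [Fin.zero_eta, Fin.isValue, if_pos rfl, if_true]
      field_simp
      linear_combination hp
    · simp only [Fin.mk_one, if_neg (by norm_num : (1 : Fin 2) ≠ 0)]
      field_simp
      ring
  · have hp₀ : (fun i : Fin 2 => if i = 0 then 0 else -(c / b))
        ∈ {x : Pt | c + a * x 0 + b * x 1 = 0} := by
      simp only [Set.mem_setOf_eq, if_pos rfl, if_neg (by norm_num : (1 : Fin 2) ≠ 0)]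
      norm_num
      field_simp
      ring
    rw [collinear_iff_of_mem hp₀]
    refine ⟨fun i : Fin 2 => if i = 0 then -b else a, fun p hp => ⟨-(p 0) / b, ?_⟩⟩
    simp only [Set.mem_setOf_eq] at hp
    funext i
    simp only [Pi.vadd_apply, vadd_eq_add, Pi.add_apply, Pi.smul_apply, smul_eq_mul]
    fin_cases i
    · simp only [Fin.zero_eta, Fin.isValue, if_pos rfl, if_true]
      field_simp
      ring
    · simp only [Fin.mk_one, if_neg (by norm_num : (1 : Fin 2) ≠ 0)]
      field_simp
      linear_combination hp


lemma Nn_succ' (a b : ℕ) (h : b = a + 1) : Nn b = Nn a + (a + 2) := by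
  subst h; exact Nn_succ a

/-- **Lemma 9 (main lemma).** Under the hypotheses of the main theorem, if additionally there is
a curve of degree `≤ k-2` passing through all the nodes of `X`, then all the nodes of `X` but
three (collinear) lie in a maximal curve of degree `k-3`. -/
theorem stmt3 (n k : ℕ) (hk4 : 4 ≤ k) (hkn : k + 1 ≤ n) (X : Finset Pt)
    (hind : NIndep n X) (hcard : X.card = dnk n (k - 3) + 3)
    (hdim : 7 ≤ Module.finrank ℝ (PkX k X))
    (σ₀ : MvPolynomial (Fin 2) ℝ) (hσ₀ : σ₀ ≠ 0) (hσ₀deg : σ₀.totalDegree ≤ k - 2)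
    (hσ₀van : ∀ A ∈ X, eval A σ₀ = 0) :
    ∃ μ : MvPolynomial (Fin 2) ℝ, μ ≠ 0 ∧ μ.totalDegree = k - 3 ∧
      {A ∈ (↑X : Set Pt) | eval A μ = 0}.ncard = dnk n (k - 3) ∧
      Collinear ℝ {A ∈ (↑X : Set Pt) | eval A μ ≠ 0} := by
  classical
  obtain ⟨u, hun⟩ : ∃ u, n = k + u ∧ 1 ≤ u := ⟨n - k, by omega⟩
  obtain ⟨hnku, hu1⟩ := hun
  have hNn3 : Nn (u + 3) ≤ Nn n := Nn_mono_s3 (by omega)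
  have hXcard : X.card + Nn (u + 3) = Nn n + 3 := by
    have h1 : n - (k - 3) = u + 3 := by omega
    unfold dnk at hcard
    rw [h1] at hcard
    omega
  -- σ₀ has exact degree k - 2
  have hσdeg : σ₀.totalDegree = k - 2 := by
    rcases Nat.lt_or_ge σ₀.totalDegree (k - 2) with hlt | hge
    · exfalso
      have hcount := count1 hind (subset_refl X) hσ₀ (d := u + 3) (by omega) hσ₀van
      omega
    · omega
  -- get p in PkX k X not a multiple of σ₀ by a quadratic
  have hex : ∃ p, p ∈ PkX k X ∧ p ∉ Mf σ₀ 2 := by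
    by_contra hcon
    push_neg at hcon
    have hle : PkX k X ≤ Mf σ₀ 2 := hcon
    have h1 : Module.finrank ℝ (PkX k X) ≤ Module.finrank ℝ (Mf σ₀ 2) :=
      Submodule.finrank_mono hle
    rw [finrank_Mf hσ₀ 2] at h1
    have : Nn 2 = 6 := by decide
    omega
  obtain ⟨p, hpP, hpnot⟩ := hex
  rw [mem_PkX_s3] at hpP
  obtain ⟨hpdeg, hpvan⟩ := hpP
  have hp0 : p ≠ 0 := by
    rintro rfl
    exact hpnot (Submodule.zero_mem _)
  obtain ⟨g, σ₁, p₁, hfac1, hfac2, hg0, hrp⟩ :=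
    exists_factor σ₀.totalDegree σ₀ p le_rfl hσ₀ hp0
  have hσ₁0 : σ₁ ≠ 0 := by
    intro h
    apply hσ₀
    rw [hfac1, h, mul_zero]
  have hp₁0 : p₁ ≠ 0 := by
    intro h
    apply hp0
    rw [hfac2, h, mul_zero]
  have hdd1 : σ₀.totalDegree = g.totalDegree + σ₁.totalDegree := by
    rw [hfac1]
    exact totalDegree_mul_eq hg0 hσ₁0
  have hdd2 : p.totalDegree = g.totalDegree + p₁.totalDegree := by
    rw [hfac2]
    exact totalDegree_mul_eq hg0 hp₁0
  -- σ₁ has degree at least 1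
  have hs1 : 1 ≤ σ₁.totalDegree := by
    rcases Nat.eq_zero_or_pos σ₁.totalDegree with hz | hpos
    · exfalso
      apply hpnot
      have hc := eq_C_of_totalDegree_eq_zero hz
      set c := coeff 0 σ₁ with hcdef
      have hc0 : c ≠ 0 := by
        intro h
        apply hσ₁0
        rw [hc, h, map_zero]
      rw [mem_Mf]
      refine ⟨C c⁻¹ * p₁, ?_, ?_⟩
      · have hp₁d : p₁.totalDegree ≤ 2 := by omega
        calc (C c⁻¹ * p₁ : MP).totalDegree ≤ (C c⁻¹ : MP).totalDegree + p₁.totalDegree :=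
            totalDegree_mul _ _
          _ ≤ 2 := by rw [totalDegree_C]; omega
      · have hCC : (C c : MP) * C c⁻¹ = 1 := by
          rw [← map_mul, mul_inv_cancel₀ hc0, map_one]
        calc σ₀ * (C c⁻¹ * p₁) = g * (C c * C c⁻¹) * p₁ := by rw [hfac1, ← hc]; ring
          _ = g * p₁ := by rw [hCC]; ring
          _ = p := hfac2.symm
    · exact hpos
  -- σ₁ has degree at most 1
  have hs2 : σ₁.totalDegree ≤ 1 := by
    by_contra hcon
    push_neg at hcon
    rcases le_or_gt σ₁.totalDegree u with hsu | hsu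
    · -- intersection inside (p * σ₁) ⬝ Π_{u - s}
      have hI : Mf σ₀ (u + 2) ⊓ Mf p u ≤ Mf (p * σ₁) (u - σ₁.totalDegree) := by
        rintro q ⟨hq1, hq2⟩
        obtain ⟨a, ha, haq⟩ := mem_Mf.mp hq1
        obtain ⟨b, hb, hbq⟩ := mem_Mf.mp hq2
        rcases eq_or_ne b 0 with rfl | hb0
        · have hq0 : q = 0 := by rw [← hbq, mul_zero]
          rw [hq0]
          exact Submodule.zero_mem _
        · have hstep : σ₁ * a = p₁ * b := by
            apply mul_left_cancel₀ hg0
            have : σ₀ * a = p * b := haq.trans hbq.symm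
            rw [hfac1, hfac2] at this
            calc g * (σ₁ * a) = g * σ₁ * a := by ring
              _ = g * p₁ * b := this
              _ = g * (p₁ * b) := by ring
          have hdvd : σ₁ ∣ b := hrp.dvd_of_dvd_mul_left ⟨a, hstep.symm⟩
          obtain ⟨cq, rfl⟩ := hdvd
          have hcq0 : cq ≠ 0 := right_ne_zero_of_mul hb0
          have hdegc : cq.totalDegree ≤ u - σ₁.totalDegree := by
            have := totalDegree_mul_eq hσ₁0 hcq0
            omega
          exact mem_Mf.mpr ⟨cq, hdegc, by rw [← hbq]; ring⟩
      have hcount := count2core hind (subset_refl X) hσ₀ hp0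
        (α := u + 2) (β := u) (by omega) (by omega) hσ₀van hpvan _ hI
      rw [finrank_Mf (mul_ne_zero hp0 hσ₁0)] at hcount
      have hu2 : 2 ≤ u := by omega
      have h1 : Nn (u + 3) = Nn (u + 2) + (u + 4) := by
        have := Nn_succ' (u + 2) (u + 3) (by omega)
        omega
      have h2 : Nn u = Nn (u - 2) + (2 * u + 1) := by
        obtain ⟨w, rfl⟩ : ∃ w, u = w + 2 := ⟨u - 2, by omega⟩
        have e1 := Nn_succ' w (w + 1) (by omega)
        have e2 := Nn_succ' (w + 1) (w + 2) (by omega)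
        simp only [Nat.add_sub_cancel]
        omega
      have h3 : Nn (u - σ₁.totalDegree) ≤ Nn (u - 2) := Nn_mono_s3 (by omega)
      omega
    · -- intersection is trivial
      have hI : Mf σ₀ (u + 2) ⊓ Mf p u ≤ (⊥ : Submodule ℝ MP) := by
        rintro q ⟨hq1, hq2⟩
        obtain ⟨a, ha, haq⟩ := mem_Mf.mp hq1
        obtain ⟨b, hb, hbq⟩ := mem_Mf.mp hq2
        rcases eq_or_ne b 0 with rfl | hb0
        · rw [Submodule.mem_bot, ← hbq, mul_zero]
        · exfalso
          have hstep : σ₁ * a = p₁ * b := by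
            apply mul_left_cancel₀ hg0
            have : σ₀ * a = p * b := haq.trans hbq.symm
            rw [hfac1, hfac2] at this
            calc g * (σ₁ * a) = g * σ₁ * a := by ring
              _ = g * p₁ * b := this
              _ = g * (p₁ * b) := by ring
          have hdvd : σ₁ ∣ b := hrp.dvd_of_dvd_mul_left ⟨a, hstep.symm⟩
          obtain ⟨cq, rfl⟩ := hdvd
          have hcq0 : cq ≠ 0 := right_ne_zero_of_mul hb0
          have := totalDegree_mul_eq hσ₁0 hcq0
          omega
      have hcount := count2core hind (subset_refl X) hσ₀ hp0
        (α := u + 2) (β := u) (by omega) (by omega) hσ₀van hpvan _ hI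
      rw [finrank_bot] at hcount
      have h1 : Nn (u + 3) = Nn (u + 2) + (u + 4) := by
        have := Nn_succ' (u + 2) (u + 3) (by omega)
        omega
      have hNu : u + 2 ≤ Nn u := by
        obtain ⟨w, rfl⟩ : ∃ w, u = w + 1 := ⟨u - 1, by omega⟩
        have e1 := Nn_succ' w (w + 1) (by omega)
        have e2 := Nn_ge w
        omega
      omega
  have hs : σ₁.totalDegree = 1 := le_antisymm hs2 hs1
  have hgdeg : g.totalDegree = k - 3 := by omega
  have hp₁deg : p₁.totalDegree ≤ 3 := by omega
  -- the two node groups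
  set Y : Finset Pt := X.filter (fun A => eval A g = 0) with hYdef
  set Z : Finset Pt := X.filter (fun A => ¬(eval A g = 0)) with hZdef
  have hYX : Y ⊆ X := Finset.filter_subset _ _
  have hZX : Z ⊆ X := Finset.filter_subset _ _
  have hYZcard : Y.card + Z.card = X.card :=
    Finset.card_filter_add_card_filter_not _
  have hgvanY : ∀ A ∈ Y, eval A g = 0 := fun A hA => (Finset.mem_filter.mp hA).2
  have hYbound : Nn (u + 3) + Y.card ≤ Nn n :=
    count1 hind hYX hg0 (d := u + 3) (by omega) hgvanY
  have hσ₁vanZ : ∀ A ∈ Z, eval A σ₁ = 0 := by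
    intro A hA
    obtain ⟨hAX, hAg⟩ := Finset.mem_filter.mp hA
    have h := hσ₀van A hAX
    rw [hfac1, map_mul] at h
    exact (mul_eq_zero.mp h).resolve_left hAg
  have hp₁vanZ : ∀ A ∈ Z, eval A p₁ = 0 := by
    intro A hA
    obtain ⟨hAX, hAg⟩ := Finset.mem_filter.mp hA
    have h := hpvan A hAX
    rw [hfac2, map_mul] at h
    exact (mul_eq_zero.mp h).resolve_left hAg
  -- Z has at most 3 nodes
  have hZbound : Z.card ≤ 3 := by
    have hI : Mf σ₁ (n - 1) ⊓ Mf p₁ (n - 3) ≤ Mf (p₁ * σ₁) (n - 4) := by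
      rintro q ⟨hq1, hq2⟩
      obtain ⟨a, ha, haq⟩ := mem_Mf.mp hq1
      obtain ⟨b, hb, hbq⟩ := mem_Mf.mp hq2
      rcases eq_or_ne b 0 with rfl | hb0
      · have hq0 : q = 0 := by rw [← hbq, mul_zero]
        rw [hq0]
        exact Submodule.zero_mem _
      · have hstep : σ₁ * a = p₁ * b := haq.trans hbq.symm
        have hdvd : σ₁ ∣ b := hrp.dvd_of_dvd_mul_left ⟨a, hstep.symm⟩
        obtain ⟨cq, rfl⟩ := hdvd
        have hcq0 : cq ≠ 0 := right_ne_zero_of_mul hb0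
        have hdegc : cq.totalDegree ≤ n - 4 := by
          have := totalDegree_mul_eq hσ₁0 hcq0
          omega
        exact mem_Mf.mpr ⟨cq, hdegc, by rw [← hbq]; ring⟩
    have hcount := count2core hind hZX hσ₁0 hp₁0
      (α := n - 1) (β := n - 3) (by omega) (by omega) hσ₁vanZ hp₁vanZ _ hI
    rw [finrank_Mf (mul_ne_zero hp₁0 hσ₁0)] at hcount
    obtain ⟨w, rfl⟩ : ∃ w, n = w + 5 := ⟨n - 5, by omega⟩
    have e1 : w + 5 - 1 = w + 4 := by omega
    have e3 : w + 5 - 3 = w + 2 := by omega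
    have e4 : w + 5 - 4 = w + 1 := by omega
    rw [e1, e3, e4] at hcount
    have f1 := Nn_succ' (w + 4) (w + 5) (by omega)
    have f2 := Nn_succ' (w + 1) (w + 2) (by omega)
    omega
  have hYcardeq : Y.card = dnk n (k - 3) ∧ Z.card = 3 := by
    have h1 : n - (k - 3) = u + 3 := by omega
    unfold dnk
    rw [h1]
    omega
  -- conclusion with μ := g
  refine ⟨g, hg0, hgdeg, ?_, ?_⟩
  · have hset : {A ∈ (↑X : Set Pt) | eval A g = 0} = (↑Y : Set Pt) := by
      ext A
      simp [hYdef]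
    rw [hset, Set.ncard_coe_finset]
    exact hYcardeq.1
  · apply collinear_of_linear (coeff (Finsupp.single 0 1) σ₁) (coeff (Finsupp.single 1 1) σ₁)
      (coeff 0 σ₁) (linear_coeff_ne hs)
    intro x hx
    obtain ⟨hxX, hxg⟩ := hx
    have hxZ : x ∈ Z := Finset.mem_filter.mpr ⟨hxX, hxg⟩
    have h := hσ₁vanZ x hxZ
    rw [eval_deg_le_one σ₁ (by omega) x] at h
    linarith [h]
end
end

section
/- Let p₁, p₂ be bivariate real polynomials with p₁ irreducible and deg p₂ ≤ deg p₁ (total degrees). Then there exists ε₀ > 0 such that for every real ε with |ε| < ε₀ the polynomial p₁ + ε·p₂ is irreducible. -/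
open MvPolynomial

noncomputable section

abbrev RR := MvPolynomial (Fin 2) ℝ

noncomputable def Fh : RR →+* Polynomial RR :=
  eval₂Hom (Polynomial.C.comp (MvPolynomial.C)) fun i => Polynomial.C (MvPolynomial.X i) * Polynomial.X

lemma Fh_monomial (d : Fin 2 →₀ ℕ) (r : ℝ) :
    Fh (monomial d r) = Polynomial.C (monomial d r) * Polynomial.X ^ (d.degree) := by
  rw [Fh, eval₂Hom_monomial]
  rw [monomial_eq]
  simp only [mul_pow, RingHom.coe_comp, Function.comp_apply]
  rw [Finsupp.prod, Finset.prod_mul_distrib, Finset.prod_pow_eq_pow_sum]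
  rw [Finsupp.degree, map_mul]
  rw [Finsupp.prod, map_prod]
  simp only [map_pow]
  ring_nf
  rfl

lemma Fh_coeff (p : RR) (k : ℕ) :
    (Fh p).coeff k = homogeneousComponent k p := by
  conv_lhs => rw [p.as_sum]
  rw [map_sum, Polynomial.finset_sum_coeff, homogeneousComponent_apply]
  rw [Finset.sum_filter]
  refine Finset.sum_congr rfl fun d hd => ?_
  rw [Fh_monomial, Polynomial.coeff_C_mul, Polynomial.coeff_X_pow]
  by_cases h : d.degree = k
  · simp [h]
  · rw [if_neg h, if_neg (fun h' : k = d.degree => h h'.symm), mul_zero]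

lemma hc_totalDegree_ne_zero {p : RR} (hp : p ≠ 0) :
    homogeneousComponent p.totalDegree p ≠ 0 := by
  obtain ⟨d, hd, hdeg⟩ := Finset.exists_mem_eq_sup p.support
    (MvPolynomial.support_nonempty.mpr hp) (fun d => d.sum fun _ e => e)
  intro h
  have hcd : coeff d (homogeneousComponent p.totalDegree p) = coeff d p := by
    rw [coeff_homogeneousComponent, if_pos]
    rw [MvPolynomial.totalDegree, hdeg]
    rfl
  rw [h] at hcd
  exact (mem_support_iff.mp hd) hcd.symm

lemma Fh_natDegree {p : RR} (hp : p ≠ 0) : (Fh p).natDegree = p.totalDegree := by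
  apply le_antisymm
  · apply Polynomial.natDegree_le_iff_coeff_eq_zero.mpr
    intro m hm
    rw [Fh_coeff]
    rw [homogeneousComponent_eq_zero _ _ hm]
  · apply Polynomial.le_natDegree_of_ne_zero
    rw [Fh_coeff]
    exact hc_totalDegree_ne_zero hp

lemma Fh_ne_zero {p : RR} (hp : p ≠ 0) : Fh p ≠ 0 := by
  intro h
  apply hc_totalDegree_ne_zero hp
  rw [← Fh_coeff, h, Polynomial.coeff_zero]

lemma totalDegree_mul_eq_s6 {p q : RR} (hp : p ≠ 0) (hq : q ≠ 0) :
    (p * q).totalDegree = p.totalDegree + q.totalDegree := by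
  rw [← Fh_natDegree (mul_ne_zero hp hq), ← Fh_natDegree hp, ← Fh_natDegree hq, map_mul,
    Polynomial.natDegree_mul (Fh_ne_zero hp) (Fh_ne_zero hq)]

lemma totalDegree_eq_zero_of_isUnit {p : RR} (h : IsUnit p) : p.totalDegree = 0 := by
  obtain ⟨u, rfl⟩ := h
  have h1 : (u : RR) * (u⁻¹ : Units RR) = 1 := u.mul_inv
  have hu : (u : RR) ≠ 0 := u.ne_zero
  have hv : ((u⁻¹ : Units RR) : RR) ≠ 0 := (u⁻¹).ne_zero
  have := totalDegree_mul_eq_s6 hu hv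
  rw [h1, totalDegree_one] at this
  omega

lemma isUnit_of_totalDegree_eq_zero {p : RR} (hp : p ≠ 0) (h : p.totalDegree = 0) : IsUnit p := by
  have hmem : ∀ m ∈ p.support, ∀ x, m x = 0 := (MvPolynomial.totalDegree_eq_zero_iff (Fin 2) p).mp h
  have : p = MvPolynomial.C (coeff 0 p) := by
    ext d
    rw [MvPolynomial.coeff_C]
    by_cases hd : d ∈ p.support
    · have : d = 0 := Finsupp.ext fun i => hmem d hd i
      simp [this, eq_comm]
    · rw [MvPolynomial.notMem_support_iff] at hd
      rw [hd]
      by_cases h0 : d = 0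
      · subst h0
        simp [hd]
      · simp [Ne.symm h0]
  rw [this]
  refine IsUnit.map _ (isUnit_iff_ne_zero.mpr ?_)
  intro hc
  rw [hc, map_zero] at this
  exact hp this

/-! ### Coefficient boxes -/

def box (N : ℕ) : Finset (Fin 2 →₀ ℕ) :=
  Finset.Iic (Finsupp.equivFunOnFinite.symm fun _ => N)

lemma mem_box {N : ℕ} {d : Fin 2 →₀ ℕ} : d ∈ box N ↔ ∀ i, d i ≤ N := by
  simp [box, Finset.mem_Iic, Finsupp.le_def]

lemma coord_le_degsum (d : Fin 2 →₀ ℕ) (i : Fin 2) : d i ≤ d.sum fun _ e => e := by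
  by_cases h : i ∈ d.support
  · exact Finset.single_le_sum (f := fun a => d a) (fun _ _ => Nat.zero_le _) h
  · rw [Finsupp.notMem_support_iff.mp h]
    exact Nat.zero_le _

lemma support_subset_box {p : RR} {N : ℕ} (h : p.totalDegree ≤ N) : p.support ⊆ box N := by
  intro d hd
  rw [mem_box]
  intro i
  exact le_trans (coord_le_degsum d i) (le_trans (MvPolynomial.le_totalDegree hd) h)

lemma box_zero_mem (N : ℕ) : (0 : Fin 2 →₀ ℕ) ∈ box N := by
  rw [mem_box]; intro i; simp

instance (N : ℕ) : Nonempty (box N) := ⟨⟨0, box_zero_mem N⟩⟩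

instance (N : ℕ) : Inhabited (box N) := ⟨⟨0, box_zero_mem N⟩⟩

/-- Coefficient vector of a polynomial on the box. -/
def vec (N : ℕ) (p : RR) : (box N) → ℝ := fun d => coeff d p

/-- Polynomial built from a coefficient vector. -/
def Theta (N : ℕ) (a : (box N) → ℝ) : RR :=
  ∑ d ∈ (box N).attach, monomial d.1 (a d)

lemma coeff_Theta (N : ℕ) (a : (box N) → ℝ) (e : Fin 2 →₀ ℕ) :
    coeff e (Theta N a) = if h : e ∈ box N then a ⟨e, h⟩ else 0 := by
  rw [Theta, MvPolynomial.coeff_sum]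
  by_cases h : e ∈ box N
  · rw [dif_pos h]
    rw [Finset.sum_eq_single_of_mem (⟨e, h⟩ : box N) (Finset.mem_attach _ _)]
    · rw [MvPolynomial.coeff_monomial, if_pos rfl]
    · intro b _ hb
      rw [MvPolynomial.coeff_monomial, if_neg]
      intro hbe
      exact hb (Subtype.ext hbe)
  · rw [dif_neg h]
    apply Finset.sum_eq_zero
    intro b _
    rw [MvPolynomial.coeff_monomial, if_neg]
    intro hbe
    exact h (hbe ▸ b.2)

lemma Theta_vec {N : ℕ} {p : RR} (h : p.support ⊆ box N) : Theta N (vec N p) = p := by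
  ext e
  rw [coeff_Theta]
  by_cases he : e ∈ box N
  · rw [dif_pos he]; rfl
  · rw [dif_neg he]
    by_contra hc
    exact he (h (MvPolynomial.mem_support_iff.mpr fun h' => hc h'.symm))

lemma Theta_smul (N : ℕ) (s : ℝ) (a : (box N) → ℝ) :
    Theta N (s • a) = s • Theta N a := by
  rw [Theta, Theta, Finset.smul_sum]
  refine Finset.sum_congr rfl fun d _ => ?_
  rw [MvPolynomial.smul_monomial]
  rfl

lemma Theta_eq_zero_iff {N : ℕ} {a : (box N) → ℝ} : Theta N a = 0 ↔ a = 0 := by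
  constructor
  · intro h
    funext d
    have := coeff_Theta N a d.1
    rw [h, dif_pos d.2] at this
    simpa using this.symm
  · rintro rfl
    rw [Theta]
    apply Finset.sum_eq_zero
    intro b _
    simp

lemma support_Theta (N : ℕ) (a : (box N) → ℝ) : (Theta N a).support ⊆ box N := by
  intro d hd
  rw [MvPolynomial.mem_support_iff, coeff_Theta] at hd
  by_cases h : d ∈ box N
  · exact h
  · exact absurd (dif_neg h) hd

lemma support_Theta_mul {N M : ℕ} (hNM : 2 * N ≤ M) (a b : (box N) → ℝ) :
    (Theta N a * Theta N b).support ⊆ box M := by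
  intro d hd
  rw [MvPolynomial.mem_support_iff, MvPolynomial.coeff_mul] at hd
  obtain ⟨x, hx, hne⟩ := Finset.exists_ne_zero_of_sum_ne_zero hd
  rw [Finset.HasAntidiagonal.mem_antidiagonal] at hx
  have h1 : x.1 ∈ (Theta N a).support := by
    rw [MvPolynomial.mem_support_iff]; intro h; rw [h, zero_mul] at hne; exact hne rfl
  have h2 : x.2 ∈ (Theta N b).support := by
    rw [MvPolynomial.mem_support_iff]; intro h; rw [h, mul_zero] at hne; exact hne rfl
  have hb1 := mem_box.mp (support_Theta N a h1)
  have hb2 := mem_box.mp (support_Theta N b h2)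
  rw [mem_box]
  intro i
  have : d i = x.1 i + x.2 i := by rw [← hx]; rfl
  rw [this]
  have := hb1 i; have := hb2 i
  omega

lemma continuous_coeff_Theta (N : ℕ) (e : Fin 2 →₀ ℕ) :
    Continuous fun a : (box N) → ℝ => coeff e (Theta N a) := by
  simp only [coeff_Theta]
  by_cases h : e ∈ box N
  · simp only [dif_pos h]
    exact continuous_apply _
  · simp only [dif_neg h]
    exact continuous_const

lemma continuous_mu (N M : ℕ) :
    Continuous fun ab : ((box N) → ℝ) × ((box N) → ℝ) =>
      vec M (Theta N ab.1 * Theta N ab.2) := by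
  apply continuous_pi
  intro d
  simp only [vec, MvPolynomial.coeff_mul]
  apply continuous_finset_sum
  intro x _
  exact ((continuous_coeff_Theta N x.1).comp continuous_fst).mul
    ((continuous_coeff_Theta N x.2).comp continuous_snd)

lemma vec_add (M : ℕ) (p q : RR) : vec M (p + q) = vec M p + vec M q := by
  funext d; simp [vec, MvPolynomial.coeff_add]

lemma vec_smul (M : ℕ) (s : ℝ) (p : RR) : vec M (s • p) = s • vec M p := by
  funext d; simp [vec, MvPolynomial.coeff_smul]

set_option maxHeartbeats 1000000

/-- **Remark 1.** If `p₁` is irreducible and `deg p₂ ≤ deg p₁`, then for sufficiently small `ε`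
the polynomial `p₁ + ε p₂` is irreducible. -/
theorem stmt6 (p₁ p₂ : MvPolynomial (Fin 2) ℝ) (hirr : Irreducible p₁)
    (hdeg : p₂.totalDegree ≤ p₁.totalDegree) :
    ∃ ε₀ : ℝ, 0 < ε₀ ∧ ∀ ε : ℝ, |ε| < ε₀ → Irreducible (p₁ + ε • p₂) := by
  classical
  set n := p₁.totalDegree with hn
  have hp₁ne : p₁ ≠ 0 := hirr.ne_zero
  have hn1 : 1 ≤ n := by
    by_contra h
    exact hirr.not_isUnit (isUnit_of_totalDegree_eq_zero hp₁ne (by omega))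
  obtain ⟨dstar, hdmem, hdstar⟩ := Finset.exists_mem_eq_sup p₁.support
    (MvPolynomial.support_nonempty.mpr hp₁ne) (fun d => d.sum fun _ e => e)
  have hdeg_dstar : (dstar.sum fun _ e => e) = n := by
    rw [hn, MvPolynomial.totalDegree, hdstar]
  have hc1 : coeff dstar p₁ ≠ 0 := MvPolynomial.mem_support_iff.mp hdmem
  set c₂ := coeff dstar p₂ with hc₂
  set ε₀' : ℝ := |coeff dstar p₁| / (|c₂| + 1) with hε₀'
  have hε₀'pos : 0 < ε₀' := div_pos (abs_pos.mpr hc1) (by positivity)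
  have hPkey : ∀ ε : ℝ, |ε| < ε₀' → coeff dstar (p₁ + ε • p₂) ≠ 0 := by
    intro e he
    rw [MvPolynomial.coeff_add, MvPolynomial.coeff_smul, smul_eq_mul]
    intro h
    have h1 : coeff dstar p₁ = -(e * c₂) := by linarith
    have h2 : |coeff dstar p₁| = |e| * |c₂| := by rw [h1, abs_neg, abs_mul]
    have h3 : ε₀' * (|c₂| + 1) = |coeff dstar p₁| := by
      rw [hε₀']; field_simp
    nlinarith [abs_nonneg e, abs_nonneg c₂]
  have hPne : ∀ ε : ℝ, |ε| < ε₀' → p₁ + ε • p₂ ≠ 0 := by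
    intro e he h0
    exact hPkey e he (by rw [h0, MvPolynomial.coeff_zero])
  have hPdeg : ∀ ε : ℝ, (p₁ + ε • p₂).totalDegree ≤ n :=
    fun e => le_trans (totalDegree_add _ _)
      (max_le le_rfl (le_trans (totalDegree_smul_le _ _) hdeg))
  have hPnotunit : ∀ ε : ℝ, |ε| < ε₀' → ¬ IsUnit (p₁ + ε • p₂) := by
    intro e he hu
    apply hPkey e he
    apply MvPolynomial.coeff_eq_zero_of_totalDegree_lt
    rw [totalDegree_eq_zero_of_isUnit hu]
    exact lt_of_lt_of_le (by omega : 0 < n) hdeg_dstar.ge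
  by_contra hcon
  push_neg at hcon
  have H : ∀ k : ℕ, ∃ e : ℝ, (|e| < ε₀' ∧ |e| < 1/(k+1)) ∧
      ¬Irreducible (p₁ + e • p₂) := by
    intro k
    obtain ⟨e, he1, he2⟩ := hcon (min ε₀' (1/(k+1))) (lt_min hε₀'pos (by positivity))
    exact ⟨e, ⟨lt_of_lt_of_le he1 (min_le_left _ _),
      lt_of_lt_of_le he1 (min_le_right _ _)⟩, he2⟩
  choose ε hεs hεirr using H
  have hε1 : ∀ k, |ε k| < ε₀' := fun k => (hεs k).1
  have hε2 : ∀ k, |ε k| < 1/(k+1) := fun k => (hεs k).2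
  have Hf : ∀ k : ℕ, ∃ q r : RR, p₁ + ε k • p₂ = q * r ∧ ¬IsUnit q ∧ ¬IsUnit r := by
    intro k
    have h := hεirr k
    rw [irreducible_iff] at h
    push_neg at h
    obtain ⟨q, r, h1, h2, h3⟩ := h (hPnotunit _ (hε1 k))
    exact ⟨q, r, h1, h2, h3⟩
  choose q r hqr hqU hrU using Hf
  have hq0 : ∀ k, q k ≠ 0 := by
    intro k h
    exact hPne _ (hε1 k) (by rw [hqr k, h, zero_mul])
  have hr0 : ∀ k, r k ≠ 0 := by
    intro k h
    exact hPne _ (hε1 k) (by rw [hqr k, h, mul_zero])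
  have hdq1 : ∀ k, 1 ≤ (q k).totalDegree := by
    intro k
    by_contra h
    exact hqU k (isUnit_of_totalDegree_eq_zero (hq0 k) (by omega))
  have hdr1 : ∀ k, 1 ≤ (r k).totalDegree := by
    intro k
    by_contra h
    exact hrU k (isUnit_of_totalDegree_eq_zero (hr0 k) (by omega))
  have hsum : ∀ k, (q k).totalDegree + (r k).totalDegree ≤ n := by
    intro k
    rw [← totalDegree_mul_eq_s6 (hq0 k) (hr0 k), ← hqr k]
    exact hPdeg _
  set N := n - 1 with hN
  set M := 2 * n with hM
  have hdqN : ∀ k, (q k).totalDegree ≤ N := by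
    intro k; have := hsum k; have := hdr1 k; omega
  have hdrN : ∀ k, (r k).totalDegree ≤ N := by
    intro k; have := hsum k; have := hdq1 k; omega
  set a : ℕ → (box N) → ℝ := fun k => vec N (q k) with ha
  set b : ℕ → (box N) → ℝ := fun k => vec N (r k) with hb
  have hΘa : ∀ k, Theta N (a k) = q k := fun k => Theta_vec (support_subset_box (hdqN k))
  have hΘb : ∀ k, Theta N (b k) = r k := fun k => Theta_vec (support_subset_box (hdrN k))
  have ha0 : ∀ k, a k ≠ 0 := by
    intro k h
    exact hq0 k (by rw [← hΘa k, Theta_eq_zero_iff.mpr h])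
  have hb0 : ∀ k, b k ≠ 0 := by
    intro k h
    exact hr0 k (by rw [← hΘb k, Theta_eq_zero_iff.mpr h])
  have hna : ∀ k, ‖a k‖ ≠ 0 := fun k => norm_ne_zero_iff.mpr (ha0 k)
  set ah : ℕ → (box N) → ℝ := fun k => (‖a k‖)⁻¹ • a k with hah
  set bh : ℕ → (box N) → ℝ := fun k => ‖a k‖ • b k with hbh
  have hΘprod : ∀ k, Theta N (ah k) * Theta N (bh k) = p₁ + ε k • p₂ := by
    intro k
    rw [hah, hbh]
    simp only
    rw [Theta_smul, Theta_smul, hΘa, hΘb, smul_mul_smul_comm,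
      inv_mul_cancel₀ (hna k), one_smul, ← hqr k]
  -- the sphere and the minimum
  have hntriv : Nontrivial ((box N) → ℝ) := Pi.nontrivial
  set S := Metric.sphere (0 : (box N) → ℝ) 1 with hS
  have hSne : S.Nonempty := NormedSpace.sphere_nonempty.mpr (by norm_num)
  have hSScomp : IsCompact (S ×ˢ S) := (isCompact_sphere _ _).prod (isCompact_sphere _ _)
  obtain ⟨⟨u₀, v₀⟩, hmem₀, hmin⟩ := hSScomp.exists_isMinOn (hSne.prod hSne)
    ((continuous_mu N M).norm.continuousOn)
  set δ := ‖vec M (Theta N u₀ * Theta N v₀)‖ with hδ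
  have hNM : 2 * N ≤ M := by omega
  have hδpos : 0 < δ := by
    rw [hδ, norm_pos_iff]
    have hu₀ : u₀ ≠ 0 := by
      intro h
      have := hmem₀.1
      rw [hS, mem_sphere_zero_iff_norm, h, norm_zero] at this
      norm_num at this
    have hv₀ : v₀ ≠ 0 := by
      intro h
      have := hmem₀.2
      rw [hS, mem_sphere_zero_iff_norm, h, norm_zero] at this
      norm_num at this
    have hprod : Theta N u₀ * Theta N v₀ ≠ 0 :=
      mul_ne_zero (fun h => hu₀ (Theta_eq_zero_iff.mp h))
        (fun h => hv₀ (Theta_eq_zero_iff.mp h))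
    obtain ⟨d, hd⟩ := MvPolynomial.support_nonempty.mpr hprod
    have hdbox : d ∈ box M := support_Theta_mul hNM u₀ v₀ hd
    intro h
    have := congrFun h ⟨d, hdbox⟩
    exact (MvPolynomial.mem_support_iff.mp hd) this
  set Mb := ‖vec M p₁‖ + ‖vec M p₂‖ with hMb
  have hPbound : ∀ k, ‖vec M (p₁ + ε k • p₂)‖ ≤ Mb := by
    intro k
    rw [vec_add, vec_smul]
    refine (norm_add_le _ _).trans ?_
    rw [hMb]
    have h1 : ‖ε k • vec M p₂‖ = |ε k| * ‖vec M p₂‖ := by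
      rw [norm_smul, Real.norm_eq_abs]
    have h2 : |ε k| ≤ 1 := by
      have := hε2 k
      have : (1:ℝ)/(k+1) ≤ 1 := by
        rw [div_le_one (by positivity)]
        linarith [Nat.cast_nonneg (α := ℝ) k]
      linarith [hε2 k]
    nlinarith [norm_nonneg (vec M p₂), abs_nonneg (ε k)]
  have hbh0 : ∀ k, bh k ≠ 0 := fun k => smul_ne_zero (hna k) (hb0 k)
  have hahS : ∀ k, ah k ∈ S := by
    intro k
    rw [hS, mem_sphere_zero_iff_norm]
    exact norm_smul_inv_norm (ha0 k)
  have hkey : ∀ k, ‖bh k‖ ≤ Mb / δ := by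
    intro k
    have hbhS : (‖bh k‖)⁻¹ • bh k ∈ S := by
      rw [hS, mem_sphere_zero_iff_norm]
      exact norm_smul_inv_norm (hbh0 k)
    have h1 := hmin (Set.mk_mem_prod (hahS k) hbhS)
    rw [Set.mem_setOf_eq] at h1
    dsimp only at h1
    rw [Theta_smul N ((‖bh k‖)⁻¹) (bh k), mul_smul_comm, vec_smul, hΘprod k,
      norm_smul, Real.norm_eq_abs, abs_of_nonneg (by positivity)] at h1
    have h2 : δ ≤ (‖bh k‖)⁻¹ * Mb := le_trans h1 (by
      have := hPbound k
      have hinv : (0:ℝ) ≤ (‖bh k‖)⁻¹ := by positivity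
      nlinarith)
    rw [le_div_iff₀ hδpos]
    have hbpos : 0 < ‖bh k‖ := norm_pos_iff.mpr (hbh0 k)
    calc ‖bh k‖ * δ ≤ ‖bh k‖ * ((‖bh k‖)⁻¹ * Mb) := by nlinarith
      _ = Mb := by field_simp
  set K := S ×ˢ Metric.closedBall (0 : (box N) → ℝ) (Mb / δ) with hK
  have hKcomp : IsCompact K := (isCompact_sphere _ _).prod (isCompact_closedBall _ _)
  set x : ℕ → ((box N) → ℝ) × ((box N) → ℝ) := fun k => (ah k, bh k) with hx
  have hxK : ∀ k, x k ∈ K := by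
    intro k
    exact ⟨hahS k, by rw [Metric.mem_closedBall, dist_zero_right]; exact hkey k⟩
  obtain ⟨⟨u, v⟩, hmemK, φ, hφmono, hφlim⟩ := hKcomp.tendsto_subseq hxK
  -- limit identification
  have hεφ : Filter.Tendsto (fun k => ε (φ k)) Filter.atTop (nhds 0) := by
    apply squeeze_zero_norm (fun k => ?_) tendsto_one_div_add_atTop_nhds_zero_nat
    have h1 : |ε (φ k)| < 1/(φ k + 1) := hε2 (φ k)
    have h2 : (1:ℝ)/(φ k + 1) ≤ 1/(k+1) := by
      have hk : (k:ℝ) ≤ (φ k : ℝ) := by exact_mod_cast hφmono.le_apply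
      apply one_div_le_one_div_of_le (by positivity)
      linarith
    rw [Real.norm_eq_abs]
    linarith
  have hlimA : Filter.Tendsto (fun k => vec M (Theta N (x (φ k)).1 * Theta N (x (φ k)).2))
      Filter.atTop (nhds (vec M (Theta N u * Theta N v))) := by
    have := (continuous_mu N M).tendsto (u, v)
    exact this.comp hφlim
  have hlimB : Filter.Tendsto (fun k => vec M (Theta N (x (φ k)).1 * Theta N (x (φ k)).2))
      Filter.atTop (nhds (vec M p₁)) := by
    have heq : (fun k => vec M (Theta N (x (φ k)).1 * Theta N (x (φ k)).2))
        = fun k => vec M p₁ + ε (φ k) • vec M p₂ := by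
      funext k
      rw [hx]
      simp only
      rw [hΘprod (φ k), vec_add, vec_smul]
    rw [heq]
    have : Filter.Tendsto (fun k => ε (φ k) • vec M p₂) Filter.atTop
        (nhds ((0:ℝ) • vec M p₂)) := hεφ.smul tendsto_const_nhds
    rw [zero_smul] at this
    simpa using tendsto_const_nhds.add this
  have hvecEq : vec M (Theta N u * Theta N v) = vec M p₁ := tendsto_nhds_unique hlimA hlimB
  -- p₁ = Θu * Θv
  have hfact : Theta N u * Theta N v = p₁ := by
    ext e
    by_cases he : e ∈ box M
    · have := congrFun hvecEq ⟨e, he⟩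
      simpa [vec] using this
    · have h1 : coeff e (Theta N u * Theta N v) = 0 := by
        rw [← MvPolynomial.notMem_support_iff]
        intro hmem
        exact he (support_Theta_mul hNM u v hmem)
      have h2 : coeff e p₁ = 0 := by
        rw [← MvPolynomial.notMem_support_iff]
        intro hmem
        refine he (support_subset_box ?_ hmem)
        rw [← hn]
        omega
      rw [h1, h2]
  -- degrees of the factors
  have hcoordlim : ∀ d : box N, N < (d.1.sum fun _ e => e) → u d = 0 := by
    intro d hd
    have hzero : ∀ k, (x (φ k)).1 d = 0 := by
      intro k
      rw [hx]
      simp only [hah]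
      rw [Pi.smul_apply, smul_eq_mul]
      have : a (φ k) d = 0 := by
        rw [ha]
        simp only [vec]
        apply MvPolynomial.coeff_eq_zero_of_totalDegree_lt
        exact lt_of_le_of_lt (hdqN (φ k)) hd
      rw [this, mul_zero]
    have hlc : Filter.Tendsto (fun k => (x (φ k)).1 d) Filter.atTop (nhds (u d)) := by
      have hcont : Continuous fun p : ((box N) → ℝ) × ((box N) → ℝ) => p.1 d :=
        (continuous_apply d).comp continuous_fst
      exact (hcont.tendsto (u, v)).comp hφlim
    have hlc0 : Filter.Tendsto (fun _ : ℕ => (0:ℝ)) Filter.atTop (nhds (u d)) :=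
      hlc.congr hzero
    exact tendsto_nhds_unique hlc0 tendsto_const_nhds
  have hdegu : (Theta N u).totalDegree ≤ N := by
    apply Finset.sup_le
    intro d hd
    by_contra hlt
    push_neg at hlt
    have hdbox : d ∈ box N := support_Theta N u hd
    have := hcoordlim ⟨d, hdbox⟩ hlt
    have hc := MvPolynomial.mem_support_iff.mp hd
    rw [coeff_Theta, dif_pos hdbox] at hc
    exact hc this
  have hcoordlimv : ∀ d : box N, N < (d.1.sum fun _ e => e) → v d = 0 := by
    intro d hd
    have hzero : ∀ k, (x (φ k)).2 d = 0 := by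
      intro k
      rw [hx]
      simp only [hbh]
      rw [Pi.smul_apply, smul_eq_mul]
      have : b (φ k) d = 0 := by
        rw [hb]
        simp only [vec]
        apply MvPolynomial.coeff_eq_zero_of_totalDegree_lt
        exact lt_of_le_of_lt (hdrN (φ k)) hd
      rw [this, mul_zero]
    have hlc : Filter.Tendsto (fun k => (x (φ k)).2 d) Filter.atTop (nhds (v d)) := by
      have hcont : Continuous fun p : ((box N) → ℝ) × ((box N) → ℝ) => p.2 d :=
        (continuous_apply d).comp continuous_snd
      exact (hcont.tendsto (u, v)).comp hφlim
    have hlc0 : Filter.Tendsto (fun _ : ℕ => (0:ℝ)) Filter.atTop (nhds (v d)) :=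
      hlc.congr hzero
    exact tendsto_nhds_unique hlc0 tendsto_const_nhds
  have hdegv : (Theta N v).totalDegree ≤ N := by
    apply Finset.sup_le
    intro d hd
    by_contra hlt
    push_neg at hlt
    have hdbox : d ∈ box N := support_Theta N v hd
    have := hcoordlimv ⟨d, hdbox⟩ hlt
    have hc := MvPolynomial.mem_support_iff.mp hd
    rw [coeff_Theta, dif_pos hdbox] at hc
    exact hc this
  -- final contradiction
  have hΘune : Theta N u ≠ 0 := by
    intro h
    have hu0 : u = 0 := Theta_eq_zero_iff.mp h
    have hmu := hmemK.1
    rw [hS, mem_sphere_zero_iff_norm, hu0, norm_zero] at hmu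
    norm_num at hmu
  have hΘvne : Theta N v ≠ 0 := by
    intro h
    rw [h, mul_zero] at hfact
    exact hp₁ne hfact.symm
  have hsum2 : (Theta N u).totalDegree + (Theta N v).totalDegree = n := by
    rw [← totalDegree_mul_eq_s6 hΘune hΘvne, hfact, ← hn]
  rcases hirr.isUnit_or_isUnit hfact.symm with h | h
  · have h0 := totalDegree_eq_zero_of_isUnit h
    omega
  · have h0 := totalDegree_eq_zero_of_isUnit h
    omega
end
end

section
/- Let σ₀, s₁, s₂ be linearly independent bivariate real polynomials, each of exact total degree k and each squarefree. Suppose that every nonzero ℝ-linear combination s of s₁ and s₂ differs from σ₀ by a factor of degree at most two, i.e., there exist polynomials r and γ, γ₀ of total degree ≤ 2 with s = γ·r and σ₀ = γ₀·r. Then there exist a polynomial σ̃₀ of total degree ≤ k−1 and polynomials β₀, β₁, β₂ of total degree ≤ 2 such that σ₀ = σ̃₀·β₀, s₁ = σ̃₀·β₁, and s₂ = σ̃₀·β₂. -/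
open MvPolynomial

noncomputable section

lemma aux_eq_C {σ : Type*} {R : Type*} [CommSemiring R] {p : MvPolynomial σ R}
    (h : p.totalDegree = 0) : p = C (coeff 0 p) := by
  classical
  ext d
  rcases eq_or_ne d 0 with rfl | hd
  · simp
  · rw [coeff_C, if_neg (Ne.symm hd)]
    apply coeff_eq_zero_of_totalDegree_lt
    rw [h]
    have h2 : Finsupp.degree d ≠ 0 := fun hz => hd ((Finsupp.degree_eq_zero_iff d).mp hz)
    exact Nat.pos_of_ne_zero h2


lemma aux_td_mul {σ R : Type*} [CommRing R] [IsDomain R]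
    {p q : MvPolynomial σ R} (hp : p ≠ 0) (hq : q ≠ 0) :
    (p * q).totalDegree = p.totalDegree + q.totalDegree := by
  classical
  refine le_antisymm (totalDegree_mul p q) ?_
  set dp := p.totalDegree with hdp
  set dq := q.totalDegree with hdq
  set P := homogeneousComponent dp p with hPdef
  set Q := homogeneousComponent dq q with hQdef
  have hdegsum : ∀ d : σ →₀ ℕ, (d.sum fun _ e => e) = Finsupp.degree d := by
    intro d; rfl
  have hPne : P ≠ 0 := by
    obtain ⟨d, hd, hsup⟩ := Finset.exists_mem_eq_sup p.support
      (support_nonempty.mpr hp) (fun s => s.sum fun _ e => e)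
    intro h
    have hc : coeff d P = coeff d p := by
      rw [hPdef, coeff_homogeneousComponent, if_pos]
      rw [← hdegsum d, ← hsup]; rfl
    rw [h, coeff_zero] at hc
    exact (mem_support_iff.mp hd) hc.symm
  have hQne : Q ≠ 0 := by
    obtain ⟨d, hd, hsup⟩ := Finset.exists_mem_eq_sup q.support
      (support_nonempty.mpr hq) (fun s => s.sum fun _ e => e)
    intro h
    have hc : coeff d Q = coeff d q := by
      rw [hQdef, coeff_homogeneousComponent, if_pos]
      rw [← hdegsum d, ← hsup]; rfl
    rw [h, coeff_zero] at hc
    exact (mem_support_iff.mp hd) hc.symm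
  have hhom : (P * Q).IsHomogeneous (dp + dq) :=
    (homogeneousComponent_isHomogeneous dp p).mul (homogeneousComponent_isHomogeneous dq q)
  have hPQne : P * Q ≠ 0 := mul_ne_zero hPne hQne
  obtain ⟨d, hd⟩ := support_nonempty.mpr hPQne
  have hdsum : Finsupp.degree d = dp + dq := by
    have := hhom (mem_support_iff.mp hd)
    rwa [Finsupp.degree_eq_weight_one]
  have hkey : coeff d (p * q) = coeff d (P * Q) := by
    rw [coeff_mul, coeff_mul]
    refine Finset.sum_congr rfl fun x hx => ?_
    rw [Finset.HasAntidiagonal.mem_antidiagonal] at hx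
    have hxsum : Finsupp.degree x.1 + Finsupp.degree x.2 = dp + dq := by
      rw [← hdsum, ← hx]
      simp [Finsupp.degree_eq_weight_one, map_add]
    by_cases h1 : Finsupp.degree x.1 = dp
    · have h2 : Finsupp.degree x.2 = dq := by omega
      rw [hPdef, hQdef, coeff_homogeneousComponent, coeff_homogeneousComponent,
        if_pos h1, if_pos h2]
    · rcases lt_or_gt_of_ne h1 with hlt | hgt
      · have h2 : dq < Finsupp.degree x.2 := by omega
        have hz : coeff x.2 q = 0 :=
          coeff_eq_zero_of_totalDegree_lt h2
        have hz' : coeff x.2 Q = 0 := by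
          apply coeff_eq_zero_of_totalDegree_lt
          exact lt_of_le_of_lt (homogeneousComponent_isHomogeneous dq q).totalDegree_le h2
        rw [hz, hz', mul_zero, mul_zero]
      · have hz : coeff x.1 p = 0 := coeff_eq_zero_of_totalDegree_lt hgt
        have hz' : coeff x.1 P = 0 := by
          apply coeff_eq_zero_of_totalDegree_lt
          exact lt_of_le_of_lt (homogeneousComponent_isHomogeneous dp p).totalDegree_le hgt
        rw [hz, hz', zero_mul, zero_mul]
  have : d ∈ (p * q).support := by
    rw [mem_support_iff, hkey]
    exact mem_support_iff.mp hd
  calc dp + dq = d.sum fun _ e => e := by rw [hdegsum, hdsum]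
  _ ≤ (p * q).totalDegree := le_totalDegree this


/-- **Lemma 10.** Let `σ₀, s₁, s₂` be linearly independent squarefree polynomials of exact
degree `k`. Suppose every nonzero linear combination of `s₁, s₂` differs from `σ₀` by a factor
of degree at most two. Then `σ₀ = σ̃₀ β₀`, `s₁ = σ̃₀ β₁`, `s₂ = σ̃₀ β₂` with
`σ̃₀ ∈ Π_{k-1}` and `βᵢ ∈ Π₂`. -/
theorem stmt8 (k : ℕ) (σ₀ s₁ s₂ : MvPolynomial (Fin 2) ℝ)
    (hli : LinearIndependent ℝ ![σ₀, s₁, s₂])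
    (hdeg₀ : σ₀.totalDegree = k) (hdeg₁ : s₁.totalDegree = k) (hdeg₂ : s₂.totalDegree = k)
    (hne₀ : σ₀ ≠ 0) (hne₁ : s₁ ≠ 0) (hne₂ : s₂ ≠ 0)
    (hsq₀ : Squarefree σ₀) (hsq₁ : Squarefree s₁) (hsq₂ : Squarefree s₂)
    (hfac : ∀ a b : ℝ, a • s₁ + b • s₂ ≠ 0 →
      ∃ r γ γ₀ : MvPolynomial (Fin 2) ℝ, γ.totalDegree ≤ 2 ∧ γ₀.totalDegree ≤ 2 ∧
        a • s₁ + b • s₂ = γ * r ∧ σ₀ = γ₀ * r) :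
    ∃ σt β₀ β₁ β₂ : MvPolynomial (Fin 2) ℝ, σt.totalDegree ≤ k - 1 ∧
      β₀.totalDegree ≤ 2 ∧ β₁.totalDegree ≤ 2 ∧ β₂.totalDegree ≤ 2 ∧
      σ₀ = σt * β₀ ∧ s₁ = σt * β₁ ∧ s₂ = σt * β₂ := by
  classical
  -- extract linear independence as a statement about coefficients
  have hcomb : ∀ a b c : ℝ, a • σ₀ + b • s₁ + c • s₂ = 0 → a = 0 ∧ b = 0 ∧ c = 0 := by
    intro a b c h
    have := Fintype.linearIndependent_iff.mp hli ![a, b, c] (by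
      simpa [Fin.sum_univ_three, add_assoc] using h)
    exact ⟨this 0, this 1, this 2⟩
  rcases le_or_gt k 2 with hk | hk
  · exact ⟨1, σ₀, s₁, s₂, by simp, by rw [hdeg₀]; exact hk, by rw [hdeg₁]; exact hk,
      by rw [hdeg₂]; exact hk, (one_mul _).symm, (one_mul _).symm, (one_mul _).symm⟩
  -- main case
  letI : NormalizationMonoid (MvPolynomial (Fin 2) ℝ) :=
    UniqueFactorizationMonoid.normalizationMonoid.toNormalizationMonoid
  have hs : ∀ t : ℝ, (1 : ℝ) • s₁ + t • s₂ ≠ 0 := by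
    intro t h
    have := (hcomb 0 1 t (by simpa using h)).2.1
    norm_num at this
  choose r γ γ₀ hγ hγ₀ hsr hσr using fun t : ℝ => hfac 1 t (hs t)
  have hrne : ∀ t : ℝ, r t ≠ 0 := by
    intro t h
    exact hne₀ (by rw [hσr t, h, mul_zero])
  have hrdvd : ∀ t : ℝ, r t ∣ σ₀ := fun t => ⟨γ₀ t, by rw [hσr t, mul_comm]⟩
  -- pigeonhole on normalized factors
  set M := UniqueFactorizationMonoid.normalizedFactors σ₀ with hM
  have hmem : ∀ t : ℝ, UniqueFactorizationMonoid.normalizedFactors (r t) ∈ M.powerset.toFinset := by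
    intro t
    rw [Multiset.mem_toFinset, Multiset.mem_powerset]
    exact (UniqueFactorizationMonoid.dvd_iff_normalizedFactors_le_normalizedFactors
      (hrne t) hne₀).mp (hrdvd t)
  obtain ⟨t, t', htt', heq⟩ := Finite.exists_ne_map_eq_of_infinite
    (fun t : ℝ => (⟨UniqueFactorizationMonoid.normalizedFactors (r t), hmem t⟩ :
      {m // m ∈ M.powerset.toFinset}))
  have heq' : UniqueFactorizationMonoid.normalizedFactors (r t)
      = UniqueFactorizationMonoid.normalizedFactors (r t') := by
    simpa using congrArg Subtype.val heq
  have hassoc : Associated (r t) (r t') := by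
    have h1 := UniqueFactorizationMonoid.prod_normalizedFactors (hrne t)
    have h2 := UniqueFactorizationMonoid.prod_normalizedFactors (hrne t')
    exact h1.symm.trans (heq' ▸ h2)
  -- r t divides both linear combinations
  have hd1 : r t ∣ (1 : ℝ) • s₁ + t • s₂ := ⟨γ t, by rw [hsr t, mul_comm]⟩
  have hd2 : r t ∣ (1 : ℝ) • s₁ + t' • s₂ :=
    dvd_trans hassoc.dvd ⟨γ t', by rw [hsr t', mul_comm]⟩
  -- hence divides s₂ and s₁
  have hds₂ : r t ∣ s₂ := by
    have hdiff : r t ∣ (t - t') • s₂ := by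
      have : (t - t') • s₂ = ((1:ℝ) • s₁ + t • s₂) - ((1:ℝ) • s₁ + t' • s₂) := by
        rw [sub_smul]; ring
      rw [this]; exact dvd_sub hd1 hd2
    have hne : (t - t') ≠ 0 := sub_ne_zero.mpr htt'
    have : s₂ = C (t - t')⁻¹ * ((t - t') • s₂) := by
      rw [smul_eq_C_mul, ← mul_assoc, ← map_mul, inv_mul_cancel₀ hne, map_one, one_mul]
    rw [this]; exact Dvd.dvd.mul_left hdiff _
  have hds₁ : r t ∣ s₁ := by
    have h2 : r t ∣ t • s₂ := by rw [smul_eq_C_mul]; exact Dvd.dvd.mul_left hds₂ _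
    have h3 : s₁ = ((1:ℝ) • s₁ + t • s₂) - t • s₂ := by rw [one_smul]; ring
    rw [h3]
    exact dvd_sub hd1 h2
  obtain ⟨β₁, hβ₁⟩ := hds₁
  obtain ⟨β₂, hβ₂⟩ := hds₂
  -- degree bookkeeping
  have hγ₀ne : γ₀ t ≠ 0 := fun h => hne₀ (by rw [hσr t, h, zero_mul])
  have hβ₁ne : β₁ ≠ 0 := fun h => hne₁ (by rw [hβ₁, h, mul_zero])
  have hβ₂ne : β₂ ≠ 0 := fun h => hne₂ (by rw [hβ₂, h, mul_zero])
  have hd₀ : (γ₀ t).totalDegree + (r t).totalDegree = k := by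
    rw [← hdeg₀, hσr t, aux_td_mul hγ₀ne (hrne t)]
  have hd₁ : (r t).totalDegree + β₁.totalDegree = k := by
    rw [← hdeg₁, hβ₁, aux_td_mul (hrne t) hβ₁ne]
  have hd₂ : (r t).totalDegree + β₂.totalDegree = k := by
    rw [← hdeg₂, hβ₂, aux_td_mul (hrne t) hβ₂ne]
  -- if γ₀ t has degree 0, contradiction with linear independence
  have hγ₀pos : (γ₀ t).totalDegree ≠ 0 := by
    intro h0
    have hβ₁0 : β₁.totalDegree = 0 := by omega
    obtain ⟨c₀, hc₀⟩ : ∃ c, γ₀ t = C c := ⟨_, aux_eq_C h0⟩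
    obtain ⟨c₁, hc₁⟩ : ∃ c, β₁ = C c := ⟨_, aux_eq_C hβ₁0⟩
    have hc₀ne : c₀ ≠ 0 := fun h => hγ₀ne (by rw [hc₀, h, map_zero])
    have hrel : c₁ • σ₀ + (-c₀) • s₁ + (0:ℝ) • s₂ = 0 := by
      rw [smul_eq_C_mul, smul_eq_C_mul, hσr t, hβ₁, hc₀, hc₁, zero_smul, map_neg]
      ring
    exact hc₀ne (neg_eq_zero.mp (hcomb _ _ _ hrel).2.1 |>.symm ▸ rfl)
  have hγ₀2 := hγ₀ t
  refine ⟨r t, γ₀ t, β₁, β₂, by omega, hγ₀2, by omega, by omega,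
    by rw [hσr t, mul_comm], hβ₁, hβ₂⟩
end
end

section
/- Let L be a finite set of lines in ℝ² and let S be a set of 2m points, each lying on some line of L, such that no point of S lies on two distinct lines of L. Then S can be partitioned into m pairs such that the two points of each pair do not lie on the same line of L if and only if every line of L contains at most m points of S. -/
open MvPolynomial

noncomputable section

/-- If two elements lie in the same block `b` of a flattened list of pairwise disjoint blocks,
their indices differ by less than `b.length`. -/
private lemma blockIdx {α : Type*} [DecidableEq α] :
    ∀ (bs : List (List α)), bs.Pairwise (fun b b' => ∀ x ∈ b, x ∉ b') →
      ∀ b ∈ bs, ∀ A ∈ b, ∀ B ∈ b,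
        bs.flatten.idxOf B < bs.flatten.idxOf A + b.length := by
  intro bs
  induction bs with
  | nil => simp
  | cons c t ih =>
    intro hpw b hb A hA B hB
    rw [List.flatten_cons]
    rcases List.mem_cons.1 hb with rfl | hbt
    · rw [List.idxOf_append_of_mem hA, List.idxOf_append_of_mem hB]
      have : b.idxOf B < b.length := List.idxOf_lt_length_iff.2 hB
      omega
    · have hdisj := (List.pairwise_cons.1 hpw).1 b hbt
      have hA' : A ∉ c := fun h => hdisj A h hA
      have hB' : B ∉ c := fun h => hdisj B h hB
      rw [List.idxOf_append_of_notMem hA', List.idxOf_append_of_notMem hB']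
      have := ih (List.pairwise_cons.1 hpw).2 b hbt A hA B hB
      omega

/-- **Lemma 14.** Given a finite set of lines `L` and a set `S` of `2m` points lying on these
lines, no point lying on two distinct lines, `S` can be divided into `m` pairs such that no pair
belongs to the same line iff each line contains at most `m` points of `S`. -/
theorem stmt9 (m : ℕ) (hm : 0 < m) (L : Finset (Set Pt))
    (hL : ∀ l ∈ L, ∃ p : MvPolynomial (Fin 2) ℝ, p.totalDegree = 1 ∧
      l = {A : Pt | eval A p = 0})
    (S : Finset Pt) (hcard : S.card = 2 * m)
    (hcover : ∀ A ∈ S, ∃ l ∈ L, A ∈ l)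
    (hone : ∀ A ∈ S, ∀ l₁ ∈ L, ∀ l₂ ∈ L, A ∈ l₁ → A ∈ l₂ → l₁ = l₂) :
    (∃ f : Pt → Pt, (∀ A ∈ S, f A ∈ S) ∧ (∀ A ∈ S, f (f A) = A) ∧ (∀ A ∈ S, f A ≠ A) ∧
        ∀ A ∈ S, ∀ l ∈ L, A ∈ l → f A ∉ l) ↔
      ∀ l ∈ L, ((↑S : Set Pt) ∩ l).ncard ≤ m := by
  classical
  have hm2 : 0 < 2 * m := by omega
  have hncard : ∀ l : Set Pt, ((↑S : Set Pt) ∩ l).ncard = (S.filter (fun A => A ∈ l)).card := by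
    intro l
    rw [← Set.ncard_coe_finset]
    congr 1
    ext x
    simp [Set.mem_inter_iff, and_comm]
  constructor
  · rintro ⟨f, hfS, hff, _, hfl⟩ l hl
    set T := S.filter (fun A => A ∈ l) with hTdef
    have hsub : T ⊆ S := Finset.filter_subset _ _
    have hmaps : ∀ A ∈ T, f A ∈ S \ T := by
      intro A hA
      have hAS : A ∈ S := hsub hA
      have hAl : A ∈ l := (Finset.mem_filter.1 hA).2
      refine Finset.mem_sdiff.2 ⟨hfS A hAS, fun hfT => ?_⟩
      exact hfl A hAS l hl hAl (Finset.mem_filter.1 hfT).2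
    have hinj : Set.InjOn f T := by
      intro a ha b hb hab
      have := congrArg f hab
      rwa [hff a (hsub ha), hff b (hsub hb)] at this
    have hcle := Finset.card_le_card_of_injOn f hmaps hinj
    have hsd : (S \ T).card = S.card - T.card := Finset.card_sdiff_of_subset hsub
    have hTle : T.card ≤ S.card := Finset.card_le_card hsub
    rw [hncard l, ← hTdef]
    omega
  · intro hle
    set bs : List (List Pt) := L.toList.map (fun l => (S.filter (fun A => A ∈ l)).toList)
      with hbs
    set lst : List Pt := bs.flatten with hlst
    have hpw : bs.Pairwise (fun b b' => ∀ x ∈ b, x ∉ b') := by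
      rw [hbs, List.pairwise_map]
      refine List.Pairwise.imp_of_mem ?_ L.nodup_toList
      intro l₁ l₂ h₁ h₂ hne x hx1 hx2
      simp only [Finset.mem_toList, Finset.mem_filter] at hx1 hx2
      exact hne (hone x hx1.1 l₁ (Finset.mem_toList.1 h₁) l₂ (Finset.mem_toList.1 h₂)
        hx1.2 hx2.2)
    have hnodup : lst.Nodup := by
      rw [hlst, List.nodup_flatten]
      refine ⟨?_, hpw.imp ?_⟩
      · intro b hb
        rw [hbs] at hb
        obtain ⟨l, -, rfl⟩ := List.mem_map.1 hb
        exact Finset.nodup_toList _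
      · intro b b' h a ha ha'
        exact h a ha ha'
    have hmem : ∀ A : Pt, A ∈ lst ↔ A ∈ S := by
      intro A
      rw [hlst, List.mem_flatten]
      constructor
      · rintro ⟨b, hb, hAb⟩
        rw [hbs] at hb
        obtain ⟨l, -, rfl⟩ := List.mem_map.1 hb
        exact (Finset.mem_filter.1 (Finset.mem_toList.1 hAb)).1
      · intro hA
        obtain ⟨l, hl, hAl⟩ := hcover A hA
        exact ⟨_, by rw [hbs]; exact List.mem_map_of_mem (Finset.mem_toList.2 hl),
          Finset.mem_toList.2 (Finset.mem_filter.2 ⟨hA, hAl⟩)⟩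
    have hlen : lst.length = 2 * m := by
      rw [← hcard, ← List.toFinset_card_of_nodup hnodup]
      congr 1
      ext x
      simp [List.mem_toFinset, hmem x]
    have hpos : ∀ A ∈ S, lst.idxOf A < 2 * m := by
      intro A hA
      rw [← hlen]
      exact List.idxOf_lt_length_iff.2 ((hmem A).2 hA)
    have hmod : ∀ i, i < 2 * m → (i + m) % (2 * m) = if i < m then i + m else i - m := by
      intro i hi
      split
      · exact Nat.mod_eq_of_lt (by omega)
      · rw [Nat.mod_eq_sub_mod (by omega)]
        have h2 : i + m - 2 * m = i - m := by omega
        rw [h2, Nat.mod_eq_of_lt (by omega)]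
    set f : Pt → Pt := fun A =>
      if hA : A ∈ S then
        lst.get ⟨(lst.idxOf A + m) % (2 * m), by rw [hlen]; exact Nat.mod_lt _ hm2⟩
      else A with hfdef
    have hfidx : ∀ A ∈ S, f A ∈ S ∧ lst.idxOf (f A) = (lst.idxOf A + m) % (2 * m) := by
      intro A hA
      have hfa : f A = lst.get ⟨(lst.idxOf A + m) % (2 * m),
          by rw [hlen]; exact Nat.mod_lt _ hm2⟩ := by
        rw [hfdef]; exact dif_pos hA
      constructor
      · rw [hfa]; exact (hmem _).1 (List.get_mem _ _)
      · rw [hfa]; exact List.get_idxOf hnodup _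
    refine ⟨f, fun A hA => (hfidx A hA).1, ?_, ?_, ?_⟩
    · intro A hA
      obtain ⟨hfS, hfi⟩ := hfidx A hA
      obtain ⟨hffS, hffi⟩ := hfidx (f A) hfS
      have hiA := hpos A hA
      have hidx : lst.idxOf (f (f A)) = lst.idxOf A := by
        rw [hffi, hfi, hmod _ hiA]
        by_cases h : lst.idxOf A < m
        · rw [if_pos h, hmod _ (by omega), if_neg (by omega)]
          omega
        · rw [if_neg h, hmod _ (by omega), if_pos (by omega)]
          omega
      exact (List.idxOf_inj ((hmem _).2 hffS)).1 hidx
    · intro A hA hcontra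
      obtain ⟨hfS, hfi⟩ := hfidx A hA
      have hiA := hpos A hA
      rw [hcontra, hmod _ hiA] at hfi
      by_cases h : lst.idxOf A < m
      · rw [if_pos h] at hfi; omega
      · rw [if_neg h] at hfi; omega
    · intro A hA l hl hAl hfAl
      obtain ⟨hfS, hfi⟩ := hfidx A hA
      set b : List Pt := (S.filter (fun x => x ∈ l)).toList with hbdef
      have hbbs : b ∈ bs := by
        rw [hbs, hbdef]; exact List.mem_map_of_mem (Finset.mem_toList.2 hl)
      have hAb : A ∈ b := by
        rw [hbdef, Finset.mem_toList]; exact Finset.mem_filter.2 ⟨hA, hAl⟩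
      have hfAb : f A ∈ b := by
        rw [hbdef, Finset.mem_toList]; exact Finset.mem_filter.2 ⟨hfS, hfAl⟩
      have hblen : b.length ≤ m := by
        rw [hbdef, Finset.length_toList, ← hncard l]
        exact hle l hl
      have h1 := blockIdx bs hpw b hbbs A hAb (f A) hfAb
      have h2 := blockIdx bs hpw b hbbs (f A) hfAb A hAb
      rw [← hlst] at h1 h2
      have hiA := hpos A hA
      rw [hmod _ hiA] at hfi
      by_cases h : lst.idxOf A < m
      · rw [if_pos h] at hfi; omega
      · rw [if_neg h] at hfi; omega
end
end
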